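/- arXiv:2305.03106 — 3 statements merged into one kernel-verified Lean document; each statement's English description precedes it below -/
import Mathlib

section
/- Let N be a binary tree-based phylogenetic network with two N-fences (a^u_1,...,a^u_{k_u}) and (a^v_1,...,a^v_{k_v}) of length at least 3 each, such that there exist directed paths in N from head(a^u_h) to tail(a^v_i) and from head(a^v_j) to tail(a^u_k) for even indices h, i, j, k with k < h and i < j. Then the auxiliary graph of every cherry cover of N contains a directed cycle; consequently N is not orchard. -/
namespace PhyloNet

/-- A binary phylogenetic network, encoded on vertex set `verts ⊆ ℕ`. -/
structure Network where
  verts : Finset ℕ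
  arc : ℕ → ℕ → Bool
  root : ℕ
  root_mem : root ∈ verts
  arc_mem : ∀ u v : ℕ, arc u v = true → u ∈ verts ∧ v ∈ verts
  acyclic : ∀ v : ℕ, ¬ Relation.TransGen (fun a b : ℕ => arc a b = true) v v
  root_indeg : (verts.filter fun u => arc u root = true).card = 0
  root_outdeg : (verts.filter fun w => arc root w = true).card = 1
  nonroot_deg : ∀ v ∈ verts, v ≠ root →
    ((verts.filter fun u => arc u v = true).card = 1 ∧
      (verts.filter fun w => arc v w = true).card = 2) ∨
    ((verts.filter fun u => arc u v = true).card = 2 ∧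
      (verts.filter fun w => arc v w = true).card = 1) ∨
    ((verts.filter fun u => arc u v = true).card = 1 ∧
      (verts.filter fun w => arc v w = true).card = 0)

def inDeg (N : Network) (v : ℕ) : ℕ := (N.verts.filter fun u => N.arc u v = true).card

def outDeg (N : Network) (v : ℕ) : ℕ := (N.verts.filter fun w => N.arc v w = true).card

def IsLeaf (N : Network) (v : ℕ) : Prop := v ∈ N.verts ∧ inDeg N v = 1 ∧ outDeg N v = 0

def IsRet (N : Network) (v : ℕ) : Prop := v ∈ N.verts ∧ inDeg N v = 2

def IsTreeVert (N : Network) (v : ℕ) : Prop := v ∈ N.verts ∧ inDeg N v = 1 ∧ outDeg N v = 2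

def IsInternal (N : Network) (v : ℕ) : Prop := v ∈ N.verts ∧ v ≠ N.root ∧ ¬ IsLeaf N v

def IsTree (N : Network) : Prop := ∀ v : ℕ, ¬ IsRet N v

noncomputable def retCount (N : Network) : ℕ := {v : ℕ | IsRet N v}.ncard

/-- Tree-child: every non-leaf vertex has a child that is a tree vertex or a leaf. -/
def IsTreeChild (N : Network) : Prop :=
  ∀ v ∈ N.verts, ¬ IsLeaf N v → ∃ w : ℕ, N.arc v w = true ∧ (IsTreeVert N w ∨ IsLeaf N w)

/-- An omnian: an internal vertex all of whose children are reticulations. -/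
def IsOmnian (N : Network) (v : ℕ) : Prop :=
  IsInternal N v ∧ ∀ w : ℕ, N.arc v w = true → IsRet N w

noncomputable def omnianCount (N : Network) : ℕ := {v : ℕ | IsOmnian N v}.ncard

/-- `N'` is obtained from `N` by adding a leaf to the arc `uv`: the arc is subdivided
by a fresh vertex `w`, and a fresh leaf `x` is attached to `w`. -/
def IsLeafAdditionOn (N N' : Network) (u v : ℕ) : Prop :=
  N.arc u v = true ∧ ∃ w x : ℕ, w ∉ N.verts ∧ x ∉ N.verts ∧ w ≠ x ∧
    N'.verts = insert w (insert x N.verts) ∧ N'.root = N.root ∧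
    ∀ a b : ℕ, (N'.arc a b = true ↔
      ((N.arc a b = true ∧ ¬ (a = u ∧ b = v)) ∨ (a = u ∧ b = w) ∨
        (a = w ∧ b = v) ∨ (a = w ∧ b = x)))

def IsLeafAddition (N N' : Network) : Prop := ∃ u v : ℕ, IsLeafAdditionOn N N' u v

/-- `N'` is obtained from `N` by adding a leaf to a reticulation arc. -/
def IsRetArcLeafAddition (N N' : Network) : Prop :=
  ∃ u v : ℕ, IsRet N v ∧ IsLeafAdditionOn N N' u v

/-- `P` holds after exactly `k` steps of relation `step` starting from `N`. -/
def ReachableBy (step : Network → Network → Prop) (N : Network) (k : ℕ)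
    (P : Network → Prop) : Prop :=
  ∃ M : ℕ → Network, M 0 = N ∧ (∀ i : ℕ, i < k → step (M i) (M (i + 1))) ∧ P (M k)

/-- The minimum number of leaf additions needed to bring `N` into the class `P`. -/
noncomputable def leafAddDist (P : Network → Prop) (N : Network) : ℕ :=
  sInf {k : ℕ | ReachableBy IsLeafAddition N k P}

noncomputable def LTC (N : Network) : ℕ := leafAddDist IsTreeChild N

/-- Reduction of a cherry (x,y): delete the leaf x and suppress its parent p
(whose own parent is q, gaining the arc q → y). -/
def ReducesCherry (N N' : Network) (x y : ℕ) : Prop :=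
  ∃ p q : ℕ, IsLeaf N x ∧ IsLeaf N y ∧ x ≠ y ∧
    N.arc p x = true ∧ N.arc p y = true ∧ N.arc q p = true ∧
    N'.verts = (N.verts.erase x).erase p ∧ N'.root = N.root ∧
    ∀ a b : ℕ, (N'.arc a b = true ↔
      (N.arc a b = true ∧ a ≠ p ∧ b ≠ p ∧ b ≠ x) ∨ (a = q ∧ b = y))

/-- Reduction of a reticulated cherry (x,y): delete the arc from the parent p_y of y
to the reticulation parent p_x of x, and clean up (suppressing p_x and p_y). -/
def ReducesRetCherry (N N' : Network) (x y : ℕ) : Prop :=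
  ∃ px py z q : ℕ, IsLeaf N x ∧ IsLeaf N y ∧ IsRet N px ∧
    N.arc px x = true ∧ N.arc py px = true ∧ N.arc py y = true ∧
    N.arc z px = true ∧ z ≠ py ∧ N.arc q py = true ∧
    N'.verts = (N.verts.erase px).erase py ∧ N'.root = N.root ∧
    ∀ a b : ℕ, (N'.arc a b = true ↔
      (N.arc a b = true ∧ a ≠ px ∧ a ≠ py ∧ b ≠ px ∧ b ≠ py) ∨
        (a = z ∧ b = x) ∨ (a = q ∧ b = y))

def CherryStep (N N' : Network) : Prop :=
  ∃ x y : ℕ, ReducesCherry N N' x y ∨ ReducesRetCherry N N' x y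

/-- A network consisting of the root and a single leaf. -/
def IsSingleLeaf (N : Network) : Prop := ∃ x : ℕ, x ≠ N.root ∧ N.verts = {N.root, x}

/-- Orchard: reducible to a single leaf by cherry and reticulated cherry reductions. -/
def IsOrchard (N : Network) : Prop :=
  ∃ N' : Network, Relation.ReflTransGen CherryStep N N' ∧ IsSingleLeaf N'

noncomputable def LOR (N : Network) : ℕ := leafAddDist IsOrchard N

/-- Tree-based: there is a spanning tree (a choice of one incoming arc for each
non-root vertex) all of whose leaves are leaves of `N`. -/
def IsTreeBased (N : Network) : Prop :=
  ∃ T : ℕ → ℕ → Bool, (∀ u v : ℕ, T u v = true → N.arc u v = true) ∧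
    (∀ v ∈ N.verts, v ≠ N.root → (N.verts.filter fun u => T u v = true).card = 1) ∧
    (∀ v ∈ N.verts, ¬ IsLeaf N v → ∃ w : ℕ, T v w = true)

noncomputable def LTB (N : Network) : ℕ := leafAddDist IsTreeBased N

/-- A zig-zag trail: a nonempty duplicate-free sequence of arcs in which
consecutive arcs share a tail or share a head. -/
def IsZigZag (N : Network) (s : List (ℕ × ℕ)) : Prop :=
  s ≠ [] ∧ s.Nodup ∧ (∀ a ∈ s, N.arc a.1 a.2 = true) ∧
    List.Chain' (fun a b : ℕ × ℕ => a.1 = b.1 ∨ a.2 = b.2) s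

def IsMaximalZigZag (N : Network) (s : List (ℕ × ℕ)) : Prop :=
  IsZigZag N s ∧ ∀ t : List (ℕ × ℕ), IsZigZag N t → s.Sublist t → t.length = s.length

/-- A W-fence: a maximal zig-zag trail of even length whose two end-arc tails
are both reticulations. -/
def IsWFence (N : Network) (s : List (ℕ × ℕ)) : Prop :=
  IsMaximalZigZag N s ∧ s.length % 2 = 0 ∧ 2 ≤ s.length ∧
    IsRet N (s.headD (0, 0)).1 ∧ IsRet N (s.getLastD (0, 0)).1

/-- An N-fence: a maximal zig-zag trail of odd length exactly one of whose
end-arc tails is a reticulation. -/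
def IsNFence (N : Network) (s : List (ℕ × ℕ)) : Prop :=
  IsMaximalZigZag N s ∧ s.length % 2 = 1 ∧
    Xor' (IsRet N (s.headD (0, 0)).1) (IsRet N (s.getLastD (0, 0)).1)

/-- A zig-zag decomposition: a set of maximal zig-zag trails partitioning the
non-root arcs of the network. -/
def IsZigZagDecomposition (N : Network) (D : Set (List (ℕ × ℕ))) : Prop :=
  (∀ s ∈ D, IsMaximalZigZag N s) ∧
  (∀ s ∈ D, ∀ p ∈ s, p.1 ≠ N.root) ∧
  (∀ a b : ℕ, N.arc a b = true → a ≠ N.root → ∃! s : List (ℕ × ℕ), s ∈ D ∧ (a, b) ∈ s)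

/-- A cherry shape: two arcs with a common tail. -/
def IsCherryShape (N : Network) (s : Set (ℕ × ℕ)) : Prop :=
  ∃ p x y : ℕ, x ≠ y ∧ N.arc p x = true ∧ N.arc p y = true ∧
    s = {(p, x), (p, y)}

/-- A reticulated cherry shape: arcs p_x x, p_y p_x, p_y y where p_x is a reticulation;
its middle arc is p_y p_x. -/
def IsRetCherryShape (N : Network) (s : Set (ℕ × ℕ)) : Prop :=
  ∃ x y px py : ℕ, IsRet N px ∧ N.arc px x = true ∧ N.arc py px = true ∧
    N.arc py y = true ∧ y ≠ px ∧ s = {(px, x), (py, px), (py, y)}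

/-- `s` is a reticulated cherry shape with middle arc `(u, r)`. -/
def IsMiddleArcOf (N : Network) (s : Set (ℕ × ℕ)) (u r : ℕ) : Prop :=
  ∃ x y : ℕ, IsRet N r ∧ N.arc r x = true ∧ N.arc u r = true ∧ N.arc u y = true ∧
    y ≠ r ∧ s = {(r, x), (u, r), (u, y)}

/-- A cherry cover: cherry shapes and reticulated cherry shapes covering every
non-root arc exactly once. -/
def IsCherryCover (N : Network) (P : Set (Set (ℕ × ℕ))) : Prop :=
  (∀ s ∈ P, IsCherryShape N s ∨ IsRetCherryShape N s) ∧
  (∀ a b : ℕ, N.arc a b = true → a ≠ N.root →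
    ∃! s : Set (ℕ × ℕ), s ∈ P ∧ (a, b) ∈ s)

/-- The internal vertices of a shape are the tails of its arcs. -/
def shapeInternals (s : Set (ℕ × ℕ)) : Set ℕ := {p : ℕ | ∃ x : ℕ, (p, x) ∈ s}

/-- The endpoints of a shape: heads of its arcs that are not tails of its arcs. -/
def shapeEndpoints (s : Set (ℕ × ℕ)) : Set ℕ :=
  {x : ℕ | (∃ p : ℕ, (p, x) ∈ s) ∧ ∀ y : ℕ, (x, y) ∉ s}

/-- In the auxiliary graph, shape `B` is directly above shape `C` if an internal
vertex of `C` is an endpoint of `B`. -/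
def DirectlyAbove (B C : Set (ℕ × ℕ)) : Prop :=
  ∃ v : ℕ, v ∈ shapeEndpoints B ∧ v ∈ shapeInternals C

/-- The auxiliary graph of the cherry cover `P` contains a directed cycle. -/
def HasCyclicAux (P : Set (Set (ℕ × ℕ))) : Prop :=
  ∃ s ∈ P, Relation.TransGen
    (fun B C : Set (ℕ × ℕ) => B ∈ P ∧ C ∈ P ∧ DirectlyAbove B C) s s

/-- A non-temporal labelling of `N`. -/
def IsNonTemporal (N : Network) (t : ℕ → ℝ) : Prop :=
  (∀ u v : ℕ, N.arc u v = true → t u ≤ t v) ∧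
  (∀ u v : ℕ, N.arc u v = true → t u = t v → IsRet N v) ∧
  (∀ u : ℕ, IsInternal N u → ∃ v : ℕ, N.arc u v = true ∧ t u < t v) ∧
  (∀ r u v : ℕ, IsRet N r → N.arc u r = true → N.arc v r = true → u ≠ v →
    ¬ (t u = t r ∧ t v = t r))

/-- An inret: a reticulation with no incoming horizontal arc
(i.e. both incoming arcs vertical). -/
def Inret (N : Network) (t : ℕ → ℝ) (r : ℕ) : Prop :=
  IsRet N r ∧ ∀ u : ℕ, N.arc u r = true → t u ≠ t r

noncomputable def inretCount (N : Network) (t : ℕ → ℝ) : ℕ := {r : ℕ | Inret N t r}.ncard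

/-- HGT-consistent labelling: a non-temporal labelling in which every reticulation
has exactly one incoming horizontal arc. -/
def IsHGTConsistent (N : Network) (t : ℕ → ℝ) : Prop :=
  IsNonTemporal N t ∧ ∀ r : ℕ, IsRet N r → ∃! u : ℕ, N.arc u r = true ∧ t u = t r

/-- V_OR: the minimum number of inrets over all non-temporal labellings. -/
noncomputable def VOR (N : Network) : ℕ :=
  sInf {k : ℕ | ∃ t : ℕ → ℝ, IsNonTemporal N t ∧ inretCount N t = k}

/-- The network `N` is the result of the vertex-cover reduction applied to `G`. -/
def IsVCReduction {α : Type} [Fintype α] [DecidableEq α] (G : SimpleGraph α)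
    (N : Network) : Prop :=
  ∃ (R W L M : α → ℕ → ℕ) (P : α → ℕ) (S : ℕ → ℕ) (rho : ℕ)
    (e : ℕ → α) (pi tau : α → α → ℕ),
    (∀ v : α, ∃! i : ℕ, 1 ≤ i ∧ i ≤ Fintype.card α ∧ e i = v) ∧
    (∀ v u : α, G.Adj v u → pi v u ∈ ({1, 2, 3} : Set ℕ)) ∧
    (∀ v u u' : α, G.Adj v u → G.Adj v u' → pi v u = pi v u' → u = u') ∧
    (∀ v u : α, G.Adj v u → tau v u ∈ ({5, 6, 7} : Set ℕ)) ∧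
    (∀ v u u' : α, G.Adj v u → G.Adj v u' → tau v u = tau v u' → u = u') ∧
    Function.Injective
      (fun z : (α × Fin 8) ⊕ (α × Fin 7) ⊕ (α × Fin 5) ⊕ (α × Fin 4) ⊕ α ⊕
          (Fin (Fintype.card α - 1)) ⊕ Unit =>
        match z with
        | Sum.inl (v, i) => R v i.1
        | Sum.inr (Sum.inl (v, i)) => W v (i.1 + 1)
        | Sum.inr (Sum.inr (Sum.inl (v, i))) => L v (i.1 + 1)
        | Sum.inr (Sum.inr (Sum.inr (Sum.inl (v, i)))) => M v (i.1 + 1)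
        | Sum.inr (Sum.inr (Sum.inr (Sum.inr (Sum.inl v)))) => P v
        | Sum.inr (Sum.inr (Sum.inr (Sum.inr (Sum.inr (Sum.inl i))))) => S (i.1 + 1)
        | Sum.inr (Sum.inr (Sum.inr (Sum.inr (Sum.inr (Sum.inr _))))) => rho) ∧
    N.root = rho ∧
    (∀ x : ℕ, x ∈ N.verts ↔
      (∃ v i, i ≤ 7 ∧ x = R v i) ∨ (∃ v i, 1 ≤ i ∧ i ≤ 7 ∧ x = W v i) ∨
      (∃ v i, 1 ≤ i ∧ i ≤ 5 ∧ x = L v i) ∨ (∃ v i, 1 ≤ i ∧ i ≤ 4 ∧ x = M v i) ∨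
      (∃ v, x = P v) ∨ (∃ i, 1 ≤ i ∧ i ≤ Fintype.card α - 1 ∧ x = S i) ∨ x = rho) ∧
    (∀ a b : ℕ, N.arc a b = true ↔
      (a = rho ∧ b = S 1) ∨
      (∃ i, 1 ≤ i ∧ i ≤ Fintype.card α - 2 ∧ a = S i ∧ b = S (i + 1)) ∨
      (∃ i, 1 ≤ i ∧ i ≤ Fintype.card α - 1 ∧ a = S i ∧ b = P (e i)) ∨
      (a = S (Fintype.card α - 1) ∧ b = P (e (Fintype.card α))) ∨
      (∃ v, a = P v ∧ (b = M v 4 ∨ b = W v 7)) ∨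
      (∃ v, a = M v 4 ∧ (b = M v 3 ∨ b = R v 0)) ∨
      (∃ v, a = M v 3 ∧ (b = M v 2 ∨ b = W v 6)) ∨
      (∃ v, a = M v 2 ∧ (b = M v 1 ∨ b = W v 5)) ∨
      (∃ v, a = M v 1 ∧ (b = R v 0 ∨ b = W v 4)) ∨
      (∃ v, a = R v 0 ∧ b = R v 1) ∨
      (∃ v i, 1 ≤ i ∧ i ≤ 6 ∧ a = W v i ∧ (b = R v i ∨ b = R v (i + 1))) ∨
      (∃ v, a = W v 7 ∧ (b = R v 7 ∨ b = L v 5)) ∨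
      (∃ v i, 1 ≤ i ∧ i ≤ 4 ∧ a = R v i ∧ b = L v i) ∨
      (∃ u v, G.Adj u v ∧ a = R u (tau u v) ∧ b = W v (pi v u)))


/-! ### Auxiliary lemmas -/

section Basic
variable {N : Network}

lemma arc_ne {a b : ℕ} (h : N.arc a b = true) : a ≠ b := by
  intro he; subst he
  exact N.acyclic a (Relation.TransGen.single h)

lemma no_two_cycle {a b : ℕ} (h : N.arc a b = true) (h' : N.arc b a = true) : False :=
  N.acyclic a (Relation.TransGen.head h (Relation.TransGen.single h'))

lemma target_ne_root {a b : ℕ} (h : N.arc a b = true) : b ≠ N.root := by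
  intro he; subst he
  have ha : a ∈ N.verts := (N.arc_mem a N.root h).1
  have hmem : a ∈ N.verts.filter fun u => N.arc u N.root = true :=
    Finset.mem_filter.2 ⟨ha, h⟩
  rw [Finset.card_eq_zero.1 N.root_indeg] at hmem
  exact absurd hmem (Finset.notMem_empty a)

lemma inDeg_le_two {v : ℕ} (hv : v ∈ N.verts) : inDeg N v ≤ 2 := by
  by_cases hr : v = N.root
  · subst hr; unfold inDeg; rw [N.root_indeg]; omega
  · rcases N.nonroot_deg v hv hr with ⟨h1,_⟩|⟨h1,_⟩|⟨h1,_⟩ <;>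
      (unfold inDeg; rw [h1]) <;> omega

lemma outDeg_le_two {v : ℕ} (hv : v ∈ N.verts) : outDeg N v ≤ 2 := by
  by_cases hr : v = N.root
  · subst hr; unfold outDeg; rw [N.root_outdeg]; omega
  · rcases N.nonroot_deg v hv hr with ⟨_,h1⟩|⟨_,h1⟩|⟨_,h1⟩ <;>
      (unfold outDeg; rw [h1]) <;> omega

lemma two_le_inDeg {u1 u2 v : ℕ} (h1 : N.arc u1 v = true) (h2 : N.arc u2 v = true)
    (hne : u1 ≠ u2) : 2 ≤ inDeg N v := by
  have hsub : ({u1, u2} : Finset ℕ) ⊆ N.verts.filter fun u => N.arc u v = true := by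
    intro w hw
    rcases Finset.mem_insert.1 hw with rfl | hw
    · exact Finset.mem_filter.2 ⟨(N.arc_mem _ _ h1).1, h1⟩
    · rw [Finset.mem_singleton.1 hw]
      exact Finset.mem_filter.2 ⟨(N.arc_mem _ _ h2).1, h2⟩
  calc 2 = ({u1, u2} : Finset ℕ).card := by
        rw [Finset.card_insert_of_notMem (by simpa using hne), Finset.card_singleton]
    _ ≤ _ := Finset.card_le_card hsub

lemma two_le_outDeg {v a b : ℕ} (h1 : N.arc v a = true) (h2 : N.arc v b = true)
    (hne : a ≠ b) : 2 ≤ outDeg N v := by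
  have hsub : ({a, b} : Finset ℕ) ⊆ N.verts.filter fun w => N.arc v w = true := by
    intro w hw
    rcases Finset.mem_insert.1 hw with rfl | hw
    · exact Finset.mem_filter.2 ⟨(N.arc_mem _ _ h1).2, h1⟩
    · rw [Finset.mem_singleton.1 hw]
      exact Finset.mem_filter.2 ⟨(N.arc_mem _ _ h2).2, h2⟩
  calc 2 = ({a, b} : Finset ℕ).card := by
        rw [Finset.card_insert_of_notMem (by simpa using hne), Finset.card_singleton]
    _ ≤ _ := Finset.card_le_card hsub

lemma isRet_of_two_parents {u1 u2 v : ℕ} (h1 : N.arc u1 v = true) (h2 : N.arc u2 v = true)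
    (hne : u1 ≠ u2) : IsRet N v := by
  have hv : v ∈ N.verts := (N.arc_mem _ _ h1).2
  exact ⟨hv, le_antisymm (inDeg_le_two hv) (two_le_inDeg h1 h2 hne)⟩

lemma parent_eq_or {u1 u2 v w : ℕ} (h1 : N.arc u1 v = true) (h2 : N.arc u2 v = true)
    (hne : u1 ≠ u2) (hw : N.arc w v = true) : w = u1 ∨ w = u2 := by
  by_contra hcon
  push_neg at hcon
  have hv : v ∈ N.verts := (N.arc_mem _ _ h1).2
  have hsub : ({w, u1, u2} : Finset ℕ) ⊆ N.verts.filter fun u => N.arc u v = true := by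
    intro z hz
    simp only [Finset.mem_insert, Finset.mem_singleton] at hz
    rcases hz with rfl | rfl | rfl
    · exact Finset.mem_filter.2 ⟨(N.arc_mem _ _ hw).1, hw⟩
    · exact Finset.mem_filter.2 ⟨(N.arc_mem _ _ h1).1, h1⟩
    · exact Finset.mem_filter.2 ⟨(N.arc_mem _ _ h2).1, h2⟩
  have h3 : 3 ≤ inDeg N v := by
    calc 3 = ({w, u1, u2} : Finset ℕ).card := by
          rw [Finset.card_insert_of_notMem (by simp [hcon.1, hcon.2]),
            Finset.card_insert_of_notMem (by simpa using hne), Finset.card_singleton]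
      _ ≤ _ := Finset.card_le_card hsub
  have := inDeg_le_two hv
  omega

lemma child_eq_or {v a b w : ℕ} (h1 : N.arc v a = true) (h2 : N.arc v b = true)
    (hne : a ≠ b) (hw : N.arc v w = true) : w = a ∨ w = b := by
  by_contra hcon
  push_neg at hcon
  have hv : v ∈ N.verts := (N.arc_mem _ _ h1).1
  have hsub : ({w, a, b} : Finset ℕ) ⊆ N.verts.filter fun z => N.arc v z = true := by
    intro z hz
    simp only [Finset.mem_insert, Finset.mem_singleton] at hz
    rcases hz with rfl | rfl | rfl
    · exact Finset.mem_filter.2 ⟨(N.arc_mem _ _ hw).2, hw⟩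
    · exact Finset.mem_filter.2 ⟨(N.arc_mem _ _ h1).2, h1⟩
    · exact Finset.mem_filter.2 ⟨(N.arc_mem _ _ h2).2, h2⟩
  have h3 : 3 ≤ outDeg N v := by
    calc 3 = ({w, a, b} : Finset ℕ).card := by
          rw [Finset.card_insert_of_notMem (by simp [hcon.1, hcon.2]),
            Finset.card_insert_of_notMem (by simpa using hne), Finset.card_singleton]
      _ ≤ _ := Finset.card_le_card hsub
  have := outDeg_le_two hv
  omega

lemma tail_ne_root_of_two {v a b : ℕ} (h1 : N.arc v a = true) (h2 : N.arc v b = true)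
    (hne : a ≠ b) : v ≠ N.root := by
  intro he; subst he
  have := two_le_outDeg h1 h2 hne
  unfold outDeg at this
  rw [N.root_outdeg] at this
  omega

lemma ret_ne_root {v : ℕ} (h : IsRet N v) : v ≠ N.root := by
  intro he
  have h2 := h.2
  rw [he] at h2
  unfold inDeg at h2
  rw [N.root_indeg] at h2
  omega

lemma ret_outDeg_one {v : ℕ} (h : IsRet N v) : outDeg N v = 1 := by
  have h2 := h.2
  unfold inDeg at h2
  rcases N.nonroot_deg v h.1 (ret_ne_root h) with ⟨ha,hb⟩|⟨ha,hb⟩|⟨ha,hb⟩ <;>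
    (unfold outDeg; omega)

lemma outDeg_one_unique {v a b : ℕ} (h : outDeg N v = 1) (h1 : N.arc v a = true)
    (h2 : N.arc v b = true) : a = b := by
  unfold outDeg at h
  exact Finset.card_le_one.1 (le_of_eq h)
    a (Finset.mem_filter.2 ⟨(N.arc_mem _ _ h1).2, h1⟩)
    b (Finset.mem_filter.2 ⟨(N.arc_mem _ _ h2).2, h2⟩)

lemma inDeg_one_unique {v a b : ℕ} (h : inDeg N v = 1) (h1 : N.arc a v = true)
    (h2 : N.arc b v = true) : a = b := by
  unfold inDeg at h
  exact Finset.card_le_one.1 (le_of_eq h)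
    a (Finset.mem_filter.2 ⟨(N.arc_mem _ _ h1).1, h1⟩)
    b (Finset.mem_filter.2 ⟨(N.arc_mem _ _ h2).1, h2⟩)

lemma outDeg_one_exists {v : ℕ} (h : outDeg N v = 1) : ∃ a, N.arc v a = true := by
  have hne : (N.verts.filter fun w => N.arc v w = true).Nonempty := by
    apply Finset.card_pos.1
    unfold outDeg at h
    omega
  obtain ⟨a, ha⟩ := hne
  exact ⟨a, (Finset.mem_filter.1 ha).2⟩

lemma leaf_no_child {x b : ℕ} (h : IsLeaf N x) (hb : N.arc x b = true) : False := by
  have hmem : b ∈ N.verts.filter fun w => N.arc x w = true :=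
    Finset.mem_filter.2 ⟨(N.arc_mem _ _ hb).2, hb⟩
  have h0 := h.2.2
  unfold outDeg at h0
  rw [Finset.card_eq_zero.1 h0] at hmem
  exact absurd hmem (Finset.notMem_empty b)

lemma leaf_parent_unique {x p u : ℕ} (h : IsLeaf N x) (hp : N.arc p x = true)
    (hu : N.arc u x = true) : u = p :=
  inDeg_one_unique h.2.1 hu hp

lemma indeg_one_of_outdeg_two {v : ℕ} (hv : v ∈ N.verts) (h : outDeg N v = 2) :
    inDeg N v = 1 := by
  have hroot : v ≠ N.root := by
    intro he; subst he
    unfold outDeg at h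
    rw [N.root_outdeg] at h
    omega
  unfold outDeg at h
  rcases N.nonroot_deg v hv hroot with ⟨ha,hb⟩|⟨ha,hb⟩|⟨ha,hb⟩ <;> (unfold inDeg; omega)

end Basic
section Cover
variable {N : Network} {P : Set (Set (ℕ × ℕ))}

abbrev AuxRel (P : Set (Set (ℕ × ℕ))) : Set (ℕ × ℕ) → Set (ℕ × ℕ) → Prop :=
  fun B C => B ∈ P ∧ C ∈ P ∧ DirectlyAbove B C

lemma shape_arc {S : Set (ℕ × ℕ)} (hS : IsCherryShape N S ∨ IsRetCherryShape N S)
    {e : ℕ × ℕ} (he : e ∈ S) : N.arc e.1 e.2 = true := by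
  rcases hS with ⟨p, x, y, hxy, hpx, hpy, rfl⟩ | ⟨x, y, px, py, hret, h1, h2, h3, hy, rfl⟩ <;>
    simp only [Set.mem_insert_iff, Set.mem_singleton_iff] at he
  · rcases he with rfl | rfl <;> assumption
  · rcases he with rfl | rfl | rfl <;> assumption

lemma shape_tail_ne_root {S : Set (ℕ × ℕ)} (hS : IsCherryShape N S ∨ IsRetCherryShape N S)
    {e : ℕ × ℕ} (he : e ∈ S) : e.1 ≠ N.root := by
  rcases hS with ⟨p, x, y, hxy, hpx, hpy, rfl⟩ | ⟨x, y, px, py, hret, h1, h2, h3, hy, rfl⟩ <;>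
    simp only [Set.mem_insert_iff, Set.mem_singleton_iff] at he
  · rcases he with rfl | rfl <;> exact tail_ne_root_of_two hpx hpy hxy
  · rcases he with rfl | rfl | rfl
    · exact ret_ne_root hret
    · exact tail_ne_root_of_two h2 h3 (Ne.symm hy)
    · exact tail_ne_root_of_two h2 h3 (Ne.symm hy)

lemma cover_unique (hP : IsCherryCover N P) {S T : Set (ℕ × ℕ)} {e : ℕ × ℕ}
    (hS : S ∈ P) (hT : T ∈ P) (heS : e ∈ S) (heT : e ∈ T) : S = T := by
  have harc := shape_arc (hP.1 S hS) heS
  have hroot : e.1 ≠ N.root := shape_tail_ne_root (hP.1 S hS) heS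
  obtain ⟨U, hU, huniq⟩ := hP.2 e.1 e.2 harc hroot
  have he' : (e.1, e.2) = e := rfl
  rw [huniq S ⟨hS, by rw [he']; exact heS⟩, huniq T ⟨hT, by rw [he']; exact heT⟩]

lemma internal_closed (hP : IsCherryCover N P) {S : Set (ℕ × ℕ)} (hS : S ∈ P)
    {w a z : ℕ} (hw : (w, a) ∈ S) (hz : N.arc w z = true) : (w, z) ∈ S := by
  rcases hP.1 S hS with ⟨p, x, y, hxy, hpx, hpy, rfl⟩ |
    ⟨x, y, px, py, hret, h1, h2, h3, hy, rfl⟩ <;>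
    simp only [Set.mem_insert_iff, Set.mem_singleton_iff, Prod.mk.injEq] at hw
  · rcases hw with ⟨rfl, rfl⟩ | ⟨rfl, rfl⟩ <;>
    · rcases child_eq_or hpx hpy hxy hz with rfl | rfl <;> simp
  · rcases hw with ⟨rfl, rfl⟩ | ⟨rfl, rfl⟩ | ⟨rfl, rfl⟩
    · have := outDeg_one_unique (ret_outDeg_one hret) hz h1
      subst this; simp
    · rcases child_eq_or h2 h3 (Ne.symm hy) hz with rfl | rfl <;> simp
    · rcases child_eq_or h2 h3 (Ne.symm hy) hz with rfl | rfl <;> simp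

lemma internal_or_endpoint {S : Set (ℕ × ℕ)} {u v : ℕ} (h : (u, v) ∈ S) :
    v ∈ shapeInternals S ∨ v ∈ shapeEndpoints S := by
  by_cases hv : ∃ y, (v, y) ∈ S
  · exact Or.inl hv
  · exact Or.inr ⟨⟨u, h⟩, fun y hy => hv ⟨y, hy⟩⟩

lemma cover_walk (hP : IsCherryCover N P) {u v : ℕ}
    (hpath : Relation.ReflTransGen (fun a b : ℕ => N.arc a b = true) u v)
    {T : Set (ℕ × ℕ)} (hT : T ∈ P) (hvT : v ∈ shapeInternals T) :
    ∀ S ∈ P, u ∈ shapeInternals S → Relation.ReflTransGen (AuxRel P) S T := by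
  induction hpath using Relation.ReflTransGen.head_induction_on with
  | refl =>
      intro S hS huS
      obtain ⟨a, ha⟩ := huS
      obtain ⟨b, hb⟩ := hvT
      have harcb : N.arc v b = true := shape_arc (hP.1 T hT) hb
      have hvb : (v, b) ∈ S := internal_closed hP hS ha harcb
      rw [cover_unique hP hS hT hvb hb]
  | @head a c harc htail ih =>
      intro S hS haS
      obtain ⟨a0, ha0⟩ := haS
      have hac : (a, c) ∈ S := internal_closed hP hS ha0 harc
      rcases Relation.ReflTransGen.cases_head htail with rfl | ⟨z, hcz, _⟩
      · by_cases hint : c ∈ shapeInternals S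
        · obtain ⟨y, hy⟩ := hint
          obtain ⟨b, hb⟩ := hvT
          have harcb := shape_arc (hP.1 T hT) hb
          have hcb : (c, b) ∈ S := internal_closed hP hS hy harcb
          rw [cover_unique hP hS hT hcb hb]
        · have hend : c ∈ shapeEndpoints S := ⟨⟨a, hac⟩, fun y hy => hint ⟨y, hy⟩⟩
          exact Relation.ReflTransGen.single ⟨hS, hT, c, hend, hvT⟩
      · have hcroot : c ≠ N.root := target_ne_root harc
        obtain ⟨S', hS'⟩ := hP.2 c z hcz hcroot
        have hS'mem : S' ∈ P := hS'.1.1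
        have hczS' : (c, z) ∈ S' := hS'.1.2
        have step2 : Relation.ReflTransGen (AuxRel P) S' T := ih S' hS'mem ⟨z, hczS'⟩
        by_cases hint : c ∈ shapeInternals S
        · obtain ⟨y, hy⟩ := hint
          have hczS : (c, z) ∈ S := internal_closed hP hS hy hcz
          rwa [cover_unique hP hS hS'mem hczS hczS']
        · have hend : c ∈ shapeEndpoints S := ⟨⟨a, hac⟩, fun y hy => hint ⟨y, hy⟩⟩
          exact Relation.ReflTransGen.head ⟨hS, hS'mem, c, hend, ⟨z, hczS'⟩⟩ step2

end Cover
section Fence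
variable {N : Network} {P : Set (Set (ℕ × ℕ))} {A : List (ℕ × ℕ)}

lemma getD_arc (harcs : ∀ e ∈ A, N.arc e.1 e.2 = true) {n : ℕ} (h : n < A.length) :
    N.arc (A.getD n (0,0)).1 (A.getD n (0,0)).2 = true := by
  apply harcs
  rw [show A.getD n (0,0) = A.get ⟨n, h⟩ from List.getD_eq_get A (0,0) ⟨n, h⟩]
  exact List.get_mem _ _

lemma getD_ne (hnodup : A.Nodup) {m n : ℕ} (hm : m < A.length) (hn : n < A.length)
    (h : m ≠ n) : A.getD m (0,0) ≠ A.getD n (0,0) := by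
  rw [show A.getD m (0,0) = A.get ⟨m, hm⟩ from List.getD_eq_get A (0,0) ⟨m, hm⟩,
    show A.getD n (0,0) = A.get ⟨n, hn⟩ from List.getD_eq_get A (0,0) ⟨n, hn⟩]
  intro heq
  have := (List.Nodup.get_inj_iff hnodup).1 heq
  simp only [Fin.mk.injEq] at this
  exact h this

lemma chain_share (hchain : A.Chain' (fun a b : ℕ × ℕ => a.1 = b.1 ∨ a.2 = b.2))
    {n : ℕ} (h : n + 1 < A.length) :
    (A.getD n (0,0)).1 = (A.getD (n+1) (0,0)).1 ∨
      (A.getD n (0,0)).2 = (A.getD (n+1) (0,0)).2 := by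
  have := List.isChain_iff_getElem.1 hchain n (by omega)
  rwa [show A.getD n (0,0) = A.get ⟨n, (by omega : n < A.length)⟩ from
      List.getD_eq_get A (0,0) ⟨n, (by omega : n < A.length)⟩,
    show A.getD (n+1) (0,0) = A.get ⟨n+1, (by omega : n + 1 < A.length)⟩ from
      List.getD_eq_get A (0,0) ⟨n+1, (by omega : n + 1 < A.length)⟩]

lemma fence_alt (hnodup : A.Nodup)
    (harcs : ∀ e ∈ A, N.arc e.1 e.2 = true)
    (hchain : A.Chain' (fun a b : ℕ × ℕ => a.1 = b.1 ∨ a.2 = b.2))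
    (hfirst : IsRet N (A.getD 0 (0, 0)).1) :
    ∀ n, n + 1 < A.length →
      (n % 2 = 0 → (A.getD n (0,0)).2 = (A.getD (n+1) (0,0)).2) ∧
      (n % 2 = 1 → (A.getD n (0,0)).1 = (A.getD (n+1) (0,0)).1) := by
  intro n
  induction n with
  | zero =>
      intro h1
      refine ⟨fun _ => ?_, fun hp => by omega⟩
      rcases chain_share hchain h1 with htl | hhd
      · exfalso
        have hd : outDeg N (A.getD 0 (0,0)).1 = 1 := ret_outDeg_one hfirst
        have a1 := getD_arc harcs h1
        rw [← htl] at a1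
        have hheads := outDeg_one_unique hd (getD_arc harcs (by omega : 0 < A.length)) a1
        exact getD_ne hnodup (by omega) h1 (by omega) (Prod.ext_iff.2 ⟨htl, hheads⟩)
      · exact hhd
  | succ n ih =>
      intro h1
      have hIH := ih (by omega)
      constructor
      · intro hp
        rcases chain_share hchain h1 with htl | hhd
        · exfalso
          have ht : (A.getD n (0,0)).1 = (A.getD (n+1) (0,0)).1 := hIH.2 (by omega)
          have a0 := getD_arc harcs (by omega : n < A.length)
          have a1 := getD_arc harcs (by omega : n + 1 < A.length)
          have a2 := getD_arc harcs (h1 : n + 1 + 1 < A.length)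
          rw [ht] at a0
          rw [← htl] at a2
          have hne01 : (A.getD n (0,0)).2 ≠ (A.getD (n+1) (0,0)).2 := by
            intro he
            exact getD_ne hnodup (by omega) (by omega) (by omega)
              (Prod.ext_iff.2 ⟨ht, he⟩)
          rcases child_eq_or a0 a1 hne01 a2 with he | he
          · exact getD_ne hnodup (by omega) (by omega) (by omega)
              (Prod.ext_iff.2 ⟨(htl.symm.trans ht.symm), he⟩)
          · exact getD_ne hnodup (by omega) (by omega) (by omega)
              (Prod.ext_iff.2 ⟨htl.symm, he⟩)
        · exact hhd
      · intro hp
        rcases chain_share hchain h1 with htl | hhd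
        · exact htl
        · exfalso
          have ht : (A.getD n (0,0)).2 = (A.getD (n+1) (0,0)).2 := hIH.1 (by omega)
          have a0 := getD_arc harcs (by omega : n < A.length)
          have a1 := getD_arc harcs (by omega : n + 1 < A.length)
          have a2 := getD_arc harcs (h1 : n + 1 + 1 < A.length)
          rw [ht] at a0
          rw [← hhd] at a2
          have hne01 : (A.getD n (0,0)).1 ≠ (A.getD (n+1) (0,0)).1 := by
            intro he
            exact getD_ne hnodup (by omega) (by omega) (by omega)
              (Prod.ext_iff.2 ⟨he, ht⟩)
          rcases parent_eq_or a0 a1 hne01 a2 with he | he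
          · exact getD_ne hnodup (by omega) (by omega) (by omega)
              (Prod.ext_iff.2 ⟨he, hhd.symm.trans ht.symm⟩)
          · exact getD_ne hnodup (by omega) (by omega) (by omega)
              (Prod.ext_iff.2 ⟨he, hhd.symm⟩)

/-- The forced reticulated-cherry shape covering the out-arc of the `r`-th head of the
fence. -/
def GoodShape (N : Network) (P : Set (Set (ℕ × ℕ))) (A : List (ℕ × ℕ)) (r : ℕ)
    (S : Set (ℕ × ℕ)) : Prop :=
  S ∈ P ∧ ∃ c : ℕ, N.arc (A.getD (2*r-1) (0,0)).2 c = true ∧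
    S = {A.getD (2*r-1) (0,0), A.getD (2*r) (0,0), ((A.getD (2*r-1) (0,0)).2, c)}

end Fence
section Fence2
variable {N : Network} {P : Set (Set (ℕ × ℕ))} {A : List (ℕ × ℕ)}

/-- Core argument: the shape covering the out-arc of a fence head is forced. -/
lemma gs_core (hP : IsCherryCover N P) {t0 t1 h g c : ℕ}
    (a0 : N.arc t0 h = true) (a1 : N.arc t1 h = true) (a2 : N.arc t1 g = true)
    (hne : t0 ≠ t1) (hhg : h ≠ g) (hc : N.arc h c = true)
    (hblock : ∀ w, N.arc t0 w = true → w ≠ h →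
      ∀ S ∈ P, (t0, w) ∈ S → (h, c) ∈ S → False) :
    ∃ S ∈ P, (h, c) ∈ S ∧ S = ({(t1, h), (t1, g), (h, c)} : Set (ℕ × ℕ)) := by
  have hret : IsRet N h := isRet_of_two_parents a0 a1 hne
  obtain ⟨S, ⟨hSP, hhcS⟩, _⟩ := hP.2 h c hc (ret_ne_root hret)
  rcases hP.1 S hSP with ⟨p, xx, yy, hxy, hpx, hpy, heq⟩ |
    ⟨xx, yy, px, py, hrpx, g1, g2, g3, hyx, heq⟩
  · exfalso
    rw [heq] at hhcS
    simp only [Set.mem_insert_iff, Set.mem_singleton_iff, Prod.mk.injEq] at hhcS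
    rcases hhcS with ⟨hhp, _⟩ | ⟨hhp, _⟩ <;>
    · rw [← hhp] at hpx hpy
      exact hxy (outDeg_one_unique (ret_outDeg_one hret) hpx hpy)
  · have hhcS' := hhcS
    rw [heq] at hhcS'
    simp only [Set.mem_insert_iff, Set.mem_singleton_iff, Prod.mk.injEq] at hhcS'
    rcases hhcS' with ⟨hhp, hcx⟩ | ⟨hhp, hcx⟩ | ⟨hhp, hcx⟩
    · -- (h, c) = (px, xx)
      rw [← hhp] at g2 hyx heq
      rw [← hcx] at heq
      rcases parent_eq_or a0 a1 hne g2 with hpy0 | hpy1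
      · -- py = t0 : blocked
        rw [hpy0] at g3 heq
        exact absurd (hblock yy g3 hyx S hSP (by rw [heq]; simp) hhcS) not_false
      · -- py = t1
        rw [hpy1] at g3 heq
        rcases child_eq_or a1 a2 hhg g3 with hyh | hyg
        · exact absurd hyh hyx
        · rw [hyg] at heq
          refine ⟨S, hSP, hhcS, ?_⟩
          rw [heq]
          ext e
          simp only [Set.mem_insert_iff, Set.mem_singleton_iff]
          tauto
    · -- (h, c) = (py, px)
      exfalso
      rw [← hhp] at g2 g3
      exact hyx (outDeg_one_unique (ret_outDeg_one hret) g3 g2)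
    · -- (h, c) = (py, yy)
      exfalso
      rw [← hhp] at g2 g3
      exact hyx (outDeg_one_unique (ret_outDeg_one hret) g3 g2)

lemma gs_step (hP : IsCherryCover N P) (hnodup : A.Nodup)
    (harcs : ∀ e ∈ A, N.arc e.1 e.2 = true)
    (hchain : A.Chain' (fun a b : ℕ × ℕ => a.1 = b.1 ∨ a.2 = b.2))
    (hfirst : IsRet N (A.getD 0 (0, 0)).1)
    {r : ℕ} (hr : 1 ≤ r) (hlen : 2*r < A.length)
    (hprev : r = 1 ∨ (2 ≤ r ∧ ∃ S', GoodShape N P A (r-1) S')) :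
    ∃ S, GoodShape N P A r S := by
  have alt := fence_alt hnodup harcs hchain hfirst
  have hb0 : 2*r-2 < A.length := by omega
  have hb1 : 2*r-1 < A.length := by omega
  have a0 := getD_arc harcs hb0
  have a1 := getD_arc harcs hb1
  have a2 := getD_arc harcs hlen
  have hhd : (A.getD (2*r-2) (0,0)).2 = (A.getD (2*r-1) (0,0)).2 := by
    have := (alt (2*r-2) (by omega)).1 (by omega)
    rwa [(by omega : 2*r-2+1 = 2*r-1)] at this
  have htl : (A.getD (2*r-1) (0,0)).1 = (A.getD (2*r) (0,0)).1 := by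
    have := (alt (2*r-1) (by omega)).2 (by omega)
    rwa [(by omega : 2*r-1+1 = 2*r)] at this
  have hne01 : (A.getD (2*r-2) (0,0)).1 ≠ (A.getD (2*r-1) (0,0)).1 := fun he =>
    getD_ne hnodup hb0 hb1 (by omega) (Prod.ext_iff.2 ⟨he, hhd⟩)
  have hhg : (A.getD (2*r-1) (0,0)).2 ≠ (A.getD (2*r) (0,0)).2 := fun he =>
    getD_ne hnodup hb1 hlen (by omega) (Prod.ext_iff.2 ⟨htl, he⟩)
  have a0' : N.arc (A.getD (2*r-2) (0,0)).1 (A.getD (2*r-1) (0,0)).2 = true := by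
    rwa [hhd] at a0
  have a2' : N.arc (A.getD (2*r-1) (0,0)).1 (A.getD (2*r) (0,0)).2 = true := by
    rwa [← htl] at a2
  have hret : IsRet N (A.getD (2*r-1) (0,0)).2 := isRet_of_two_parents a0' a1 hne01
  obtain ⟨c, hc⟩ := outDeg_one_exists (ret_outDeg_one hret)
  have hblock : ∀ w, N.arc (A.getD (2*r-2) (0,0)).1 w = true →
      w ≠ (A.getD (2*r-1) (0,0)).2 → ∀ S ∈ P, ((A.getD (2*r-2) (0,0)).1, w) ∈ S →
      ((A.getD (2*r-1) (0,0)).2, c) ∈ S → False := by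
    rcases hprev with hr1 | ⟨hr2, S', hS'P, c', hc', heq'⟩
    · intro w hw hwne S hSP hm1 hm2
      subst hr1
      have hfirst' : IsRet N (A.getD (2*1-2) (0,0)).1 := by
        rwa [(by omega : 2*1-2 = 0)]
      exact hwne (outDeg_one_unique (ret_outDeg_one hfirst') hw a0')
    · intro w hw hwne S hSP hm1 hm2
      rw [(by omega : 2*(r-1)-1 = 2*r-3)] at heq' hc'
      rw [(by omega : 2*(r-1) = 2*r-2)] at heq'
      have hb3 : 2*r-3 < A.length := by omega
      have htl' : (A.getD (2*r-3) (0,0)).1 = (A.getD (2*r-2) (0,0)).1 := by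
        have := (alt (2*r-3) (by omega)).2 (by omega)
        rwa [(by omega : 2*r-3+1 = 2*r-2)] at this
      have a3 := getD_arc harcs hb3
      have a3' : N.arc (A.getD (2*r-2) (0,0)).1 (A.getD (2*r-3) (0,0)).2 = true := by
        rwa [htl'] at a3
      have hne3 : (A.getD (2*r-3) (0,0)).2 ≠ (A.getD (2*r-1) (0,0)).2 := by
        intro he
        have : (A.getD (2*r-3) (0,0)).2 = (A.getD (2*r-2) (0,0)).2 := he.trans hhd.symm
        exact getD_ne hnodup hb3 hb0 (by omega) (Prod.ext_iff.2 ⟨htl', this⟩)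
      rcases child_eq_or a3' a0' hne3 hw with hwh' | hwh
      · -- w is the previous head
        have hmemprev : A.getD (2*r-3) (0,0) ∈ S := by
          have : A.getD (2*r-3) (0,0) = ((A.getD (2*r-2) (0,0)).1, w) := by
            rw [hwh']
            exact Prod.ext_iff.2 ⟨htl', rfl⟩
          rw [this]; exact hm1
        have hmemprev' : A.getD (2*r-3) (0,0) ∈ S' := by rw [heq']; simp
        have hSS' := cover_unique hP hSP hS'P hmemprev hmemprev'
        rw [hSS', heq'] at hm2
        simp only [Set.mem_insert_iff, Set.mem_singleton_iff] at hm2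
        rcases hm2 with hh1 | hh1 | hh1
        · have h1 : (A.getD (2*r-1) (0,0)).2 = (A.getD (2*r-3) (0,0)).1 :=
            congrArg Prod.fst hh1
          rw [htl'] at h1
          exact arc_ne a0' h1.symm
        · have h1 : (A.getD (2*r-1) (0,0)).2 = (A.getD (2*r-2) (0,0)).1 :=
            congrArg Prod.fst hh1
          exact arc_ne a0' h1.symm
        · have h1 : (A.getD (2*r-1) (0,0)).2 = (A.getD (2*r-3) (0,0)).2 :=
            congrArg Prod.fst hh1
          exact hne3 h1.symm
      · exact hwne hwh
  obtain ⟨S, hSP, hhcS, heq⟩ := gs_core hP a0' a1 a2' hne01 hhg hc hblock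
  refine ⟨S, hSP, c, hc, ?_⟩
  rw [heq]
  have e1eta : (A.getD (2*r-1) (0,0)) = ((A.getD (2*r-1) (0,0)).1, (A.getD (2*r-1) (0,0)).2) := rfl
  have e2eta : (A.getD (2*r) (0,0)) = ((A.getD (2*r-1) (0,0)).1, (A.getD (2*r) (0,0)).2) := by
    rw [htl]
  rw [← e1eta, ← e2eta]

lemma gs_exists (hP : IsCherryCover N P) (hnodup : A.Nodup)
    (harcs : ∀ e ∈ A, N.arc e.1 e.2 = true)
    (hchain : A.Chain' (fun a b : ℕ × ℕ => a.1 = b.1 ∨ a.2 = b.2))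
    (hfirst : IsRet N (A.getD 0 (0, 0)).1) :
    ∀ r, 1 ≤ r → 2*r < A.length → ∃ S, GoodShape N P A r S := by
  intro r hr
  induction r, hr using Nat.le_induction with
  | base =>
      intro hlen
      exact gs_step hP hnodup harcs hchain hfirst le_rfl hlen (Or.inl rfl)
  | succ n hn ih =>
      intro hlen
      refine gs_step hP hnodup harcs hchain hfirst (by omega) hlen (Or.inr ⟨by omega, ?_⟩)
      have : n + 1 - 1 = n := by omega
      rw [this]
      exact ih (by omega)

lemma gs_rel (hP : IsCherryCover N P) (hnodup : A.Nodup)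
    (harcs : ∀ e ∈ A, N.arc e.1 e.2 = true)
    (hchain : A.Chain' (fun a b : ℕ × ℕ => a.1 = b.1 ∨ a.2 = b.2))
    (hfirst : IsRet N (A.getD 0 (0, 0)).1)
    {r : ℕ} {S S' : Set (ℕ × ℕ)} (hr : 1 ≤ r) (hlen : 2*(r+1) < A.length)
    (hS : GoodShape N P A r S) (hS' : GoodShape N P A (r+1) S') : AuxRel P S S' := by
  have alt := fence_alt hnodup harcs hchain hfirst
  obtain ⟨hSP, c, hc, heq⟩ := hS
  obtain ⟨hS'P, c', hc', heq'⟩ := hS'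
  rw [(by omega : 2*(r+1)-1 = 2*r+1)] at heq' hc'
  rw [(by omega : 2*(r+1) = 2*r+2)] at heq'
  have hb1 : 2*r-1 < A.length := by omega
  have hb2 : 2*r < A.length := by omega
  have a2 := getD_arc harcs hb2
  have htl : (A.getD (2*r-1) (0,0)).1 = (A.getD (2*r) (0,0)).1 := by
    have := (alt (2*r-1) (by omega)).2 (by omega)
    rwa [(by omega : 2*r-1+1 = 2*r)] at this
  have hhg : (A.getD (2*r-1) (0,0)).2 ≠ (A.getD (2*r) (0,0)).2 := fun he =>
    getD_ne hnodup hb1 hb2 (by omega) (Prod.ext_iff.2 ⟨htl, he⟩)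
  have hhd : (A.getD (2*r) (0,0)).2 = (A.getD (2*r+1) (0,0)).2 := by
    have := (alt (2*r) (by omega)).1 (by omega)
    exact this
  refine ⟨hSP, hS'P, (A.getD (2*r) (0,0)).2, ⟨⟨(A.getD (2*r) (0,0)).1, ?_⟩, ?_⟩, ?_⟩
  · rw [heq]
    have : ((A.getD (2*r) (0,0)).1, (A.getD (2*r) (0,0)).2) = A.getD (2*r) (0,0) := rfl
    rw [this]
    simp
  · intro y hy
    rw [heq] at hy
    simp only [Set.mem_insert_iff, Set.mem_singleton_iff] at hy
    rcases hy with hh1 | hh1 | hh1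
    · have h1 : (A.getD (2*r) (0,0)).2 = (A.getD (2*r-1) (0,0)).1 :=
        congrArg Prod.fst hh1
      rw [htl] at h1
      exact arc_ne a2 h1.symm
    · have h1 : (A.getD (2*r) (0,0)).2 = (A.getD (2*r) (0,0)).1 :=
        congrArg Prod.fst hh1
      exact arc_ne a2 h1.symm
    · have h1 : (A.getD (2*r) (0,0)).2 = (A.getD (2*r-1) (0,0)).2 :=
        congrArg Prod.fst hh1
      exact hhg h1.symm
  · refine ⟨c', ?_⟩
    rw [heq', ← hhd]
    simp

lemma gs_chain (hP : IsCherryCover N P) (hnodup : A.Nodup)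
    (harcs : ∀ e ∈ A, N.arc e.1 e.2 = true)
    (hchain : A.Chain' (fun a b : ℕ × ℕ => a.1 = b.1 ∨ a.2 = b.2))
    (hfirst : IsRet N (A.getD 0 (0, 0)).1) :
    ∀ d r S, 1 ≤ r → GoodShape N P A r S → 2*(r+d) < A.length →
      ∃ S', GoodShape N P A (r+d) S' ∧ Relation.ReflTransGen (AuxRel P) S S' := by
  intro d
  induction d with
  | zero => exact fun r S _ hS _ => ⟨S, hS, Relation.ReflTransGen.refl⟩
  | succ n ih =>
      intro r S hr hS hlen
      obtain ⟨S1, hS1, hrtg⟩ := ih r S hr hS (by omega)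
      obtain ⟨S2, hS2⟩ := gs_exists hP hnodup harcs hchain hfirst (r+n+1) (by omega)
        (by omega)
      have hrel : AuxRel P S1 S2 := by
        have h2 : GoodShape N P A ((r+n)+1) S2 := by
          rwa [(by omega : r+n+1 = (r+n)+1)] at hS2
        exact gs_rel hP hnodup harcs hchain hfirst (by omega)
          (by omega) hS1 h2
      refine ⟨S2, by rwa [(by omega : r+(n+1) = r+n+1)], Relation.ReflTransGen.tail hrtg hrel⟩

end Fence2
section Part1
variable {N : Network}

lemma headD_eq_getD {l : List (ℕ × ℕ)} (h : l ≠ []) : l.headD (0,0) = l.getD 0 (0,0) := by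
  cases l with
  | nil => exact absurd rfl h
  | cons a l => rfl

lemma goodshape_head_internal {P : Set (Set (ℕ × ℕ))} {A : List (ℕ × ℕ)} {r : ℕ}
    {S : Set (ℕ × ℕ)} (hS : GoodShape N P A r S) :
    (A.getD (2*r-1) (0,0)).2 ∈ shapeInternals S := by
  obtain ⟨_, c, _, heq⟩ := hS
  exact ⟨c, by rw [heq]; simp⟩

lemma goodshape_tail_internal {P : Set (Set (ℕ × ℕ))} {A : List (ℕ × ℕ)} {r : ℕ}
    {S : Set (ℕ × ℕ)} (hS : GoodShape N P A r S) :
    (A.getD (2*r-1) (0,0)).1 ∈ shapeInternals S := by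
  obtain ⟨_, c, _, heq⟩ := hS
  refine ⟨(A.getD (2*r-1) (0,0)).2, ?_⟩
  have : ((A.getD (2*r-1) (0,0)).1, (A.getD (2*r-1) (0,0)).2) = A.getD (2*r-1) (0,0) := rfl
  rw [this, heq]
  simp

lemma part1 (N : Network) (A B : List (ℕ × ℕ)) (hA : IsNFence N A) (hB : IsNFence N B)
    (hAord : IsRet N ((A.headD (0, 0)).1)) (hBord : IsRet N ((B.headD (0, 0)).1))
    (h i j k : ℕ)
    (hh : Even h) (hi : Even i) (hj : Even j) (hk : Even k)
    (hk1 : 1 ≤ k) (hi1 : 1 ≤ i) (hkh : k < h) (hij : i < j)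
    (hhA : h ≤ A.length) (hjB : j ≤ B.length)
    (path1 : Relation.ReflTransGen (fun a b : ℕ => N.arc a b = true)
      ((A.getD (h - 1) (0, 0)).2) ((B.getD (i - 1) (0, 0)).1))
    (path2 : Relation.ReflTransGen (fun a b : ℕ => N.arc a b = true)
      ((B.getD (j - 1) (0, 0)).2) ((A.getD (k - 1) (0, 0)).1)) :
    ∀ P : Set (Set (ℕ × ℕ)), IsCherryCover N P → HasCyclicAux P := by
  intro P hP
  obtain ⟨hAne, hAnodup, hAarcs, hAchain⟩ := hA.1.1
  obtain ⟨hBne, hBnodup, hBarcs, hBchain⟩ := hB.1.1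
  have hAlen : A.length % 2 = 1 := hA.2.1
  have hBlen : B.length % 2 = 1 := hB.2.1
  have hAfirst : IsRet N (A.getD 0 (0,0)).1 := by rwa [headD_eq_getD hAne] at hAord
  have hBfirst : IsRet N (B.getD 0 (0,0)).1 := by rwa [headD_eq_getD hBne] at hBord
  obtain ⟨rh, hrh⟩ := hh
  obtain ⟨ri, hri⟩ := hi
  obtain ⟨rj, hrj⟩ := hj
  obtain ⟨rk, hrk⟩ := hk
  have hbh : 2*rh < A.length := by omega
  have hbj : 2*rj < B.length := by omega
  -- shapes on fence A
  obtain ⟨SAk, hSAk⟩ := gs_exists hP hAnodup hAarcs hAchain hAfirst rk (by omega) (by omega)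
  obtain ⟨SAk1, hSAk1⟩ := gs_exists hP hAnodup hAarcs hAchain hAfirst (rk+1) (by omega)
    (by omega)
  have rel1 : AuxRel P SAk SAk1 :=
    gs_rel hP hAnodup hAarcs hAchain hAfirst (by omega) (by omega) hSAk hSAk1
  obtain ⟨SAh, hSAh, chainA⟩ := gs_chain hP hAnodup hAarcs hAchain hAfirst (rh-(rk+1))
    (rk+1) SAk1 (by omega) hSAk1 (by omega)
  rw [(by omega : rk+1+(rh-(rk+1)) = rh)] at hSAh
  -- shapes on fence B
  obtain ⟨SBi, hSBi⟩ := gs_exists hP hBnodup hBarcs hBchain hBfirst ri (by omega) (by omega)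
  obtain ⟨SBj, hSBj, chainB⟩ := gs_chain hP hBnodup hBarcs hBchain hBfirst (rj-ri)
    ri SBi (by omega) hSBi (by omega)
  rw [(by omega : ri+(rj-ri) = rj)] at hSBj
  -- walks
  rw [(by omega : h - 1 = 2*rh - 1), (by omega : i - 1 = 2*ri - 1)] at path1
  rw [(by omega : j - 1 = 2*rj - 1), (by omega : k - 1 = 2*rk - 1)] at path2
  have walk1 : Relation.ReflTransGen (AuxRel P) SAh SBi :=
    cover_walk hP path1 hSBi.1 (goodshape_tail_internal hSBi) SAh hSAh.1
      (goodshape_head_internal hSAh)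
  have walk2 : Relation.ReflTransGen (AuxRel P) SBj SAk :=
    cover_walk hP path2 hSAk.1 (goodshape_tail_internal hSAk) SBj hSBj.1
      (goodshape_head_internal hSBj)
  have cyc : Relation.TransGen (AuxRel P) SAk SAk :=
    Relation.TransGen.trans_left (Relation.TransGen.single rel1)
      (((chainA.trans walk1).trans chainB).trans walk2)
  exact ⟨SAk, hSAk.1, cyc⟩

end Part1
section Pullback

/-- A cherry cover whose auxiliary graph is acyclic. -/
def AcyclicCover (N : Network) : Prop :=
  ∃ P : Set (Set (ℕ × ℕ)), IsCherryCover N P ∧ ¬ HasCyclicAux P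

lemma acyclicCover_of_singleLeaf {N : Network} (hN : IsSingleLeaf N) : AcyclicCover N := by
  refine ⟨∅, ⟨fun s hs => absurd hs (Set.notMem_empty s), ?_⟩, ?_⟩
  · intro a b harc hroot
    exfalso
    obtain ⟨x, hx, hverts⟩ := hN
    have ha := (N.arc_mem a b harc).1
    have hb := (N.arc_mem a b harc).2
    rw [hverts] at ha hb
    rcases Finset.mem_insert.1 ha with rfl | ha
    · exact hroot rfl
    · rw [Finset.mem_singleton.1 ha] at harc
      rcases Finset.mem_insert.1 hb with rfl | hb
      · exact target_ne_root harc rfl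
      · rw [Finset.mem_singleton.1 hb] at harc
        exact arc_ne harc rfl
  · rintro ⟨s, hs, _⟩
    exact absurd hs (Set.notMem_empty s)

lemma no_cycle_of_no_out {α : Type*} {Rel : α → α → Prop} {X : α}
    (hno : ∀ C, ¬ Rel X C) : ∀ b, ¬ Relation.TransGen Rel X b := by
  intro b h
  induction h with
  | single h => exact hno _ h
  | tail _ h2 ih => exact ih

lemma cover_pullback (N M : Network) (R : ℕ × ℕ → ℕ × ℕ) (Snew : Set (ℕ × ℕ))
    (hTail : ∀ e, (R e).1 = e.1)
    (hArc : ∀ e, M.arc e.1 e.2 = true → N.arc (R e).1 (R e).2 = true)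
    (hInj : ∀ e e', M.arc e.1 e.2 = true → M.arc e'.1 e'.2 = true → R e = R e' → e = e')
    (hFix : ∀ e, M.arc e.1 e.2 = true → R e = e ∨ (R e).2 ∉ M.verts)
    (hRetFix : ∀ e, M.arc e.1 e.2 = true → IsRet M e.2 → R e = e)
    (hRet : ∀ v, IsRet M v → IsRet N v)
    (hSnew : IsCherryShape N Snew ∨ IsRetCherryShape N Snew)
    (hCover : ∀ a b : ℕ, N.arc a b = true → a ≠ N.root →
      ((a, b) ∈ Snew ∧ ∀ e, M.arc e.1 e.2 = true → R e ≠ (a, b)) ∨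
      (∃ e, M.arc e.1 e.2 = true ∧ e.1 ≠ M.root ∧ R e = (a, b) ∧ (a, b) ∉ Snew))
    (hSink : ∀ e : ℕ × ℕ, M.arc e.1 e.2 = true → e.1 ∉ shapeEndpoints Snew) :
    AcyclicCover M → AcyclicCover N := by
  rintro ⟨P', hP', hacy⟩
  set P : Set (Set (ℕ × ℕ)) := insert Snew ((Set.image R) '' P') with hPdef
  have hMarcS : ∀ S ∈ P', ∀ e ∈ S, M.arc e.1 e.2 = true :=
    fun S hS e he => shape_arc (hP'.1 S hS) he
  -- shape transfer
  have hTransfer : ∀ S ∈ P', IsCherryShape N (R '' S) ∨ IsRetCherryShape N (R '' S) := by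
    intro S hS
    rcases hP'.1 S hS with ⟨p, x, y, hxy, hpx, hpy, rfl⟩ |
      ⟨x, y, px, py, hrpx, g1, g2, g3, hyx, rfl⟩
    · left
      have hm1 : M.arc (p, x).1 (p, x).2 = true := hpx
      have hm2 : M.arc (p, y).1 (p, y).2 = true := hpy
      refine ⟨p, (R (p, x)).2, (R (p, y)).2, ?_, ?_, ?_, ?_⟩
      · intro he
        have : R (p, x) = R (p, y) := by
          have e1 : R (p, x) = (p, (R (p,x)).2) := Prod.ext_iff.2 ⟨hTail _, rfl⟩
          have e2 : R (p, y) = (p, (R (p,y)).2) := Prod.ext_iff.2 ⟨hTail _, rfl⟩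
          rw [e1, e2, he]
        have := hInj _ _ hm1 hm2 this
        exact hxy (congrArg Prod.snd this)
      · have := hArc _ hm1; rwa [hTail] at this
      · have := hArc _ hm2; rwa [hTail] at this
      · rw [Set.image_insert_eq, Set.image_singleton]
        congr 1
        · exact Prod.ext_iff.2 ⟨hTail _, rfl⟩
        · congr 1
          exact Prod.ext_iff.2 ⟨hTail _, rfl⟩
    · right
      have hm1 : M.arc (px, x).1 (px, x).2 = true := g1
      have hm2 : M.arc (py, px).1 (py, px).2 = true := g2
      have hm3 : M.arc (py, y).1 (py, y).2 = true := g3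
      have hfix2 : R (py, px) = (py, px) := hRetFix _ hm2 hrpx
      refine ⟨(R (px, x)).2, (R (py, y)).2, px, py, hRet px hrpx, ?_, ?_, ?_, ?_, ?_⟩
      · have := hArc _ hm1; rwa [hTail] at this
      · have := hArc _ hm2; rwa [hfix2] at this
      · have := hArc _ hm3; rwa [hTail] at this
      · rcases hFix _ hm3 with hfix | hnm
        · rw [hfix]; exact hyx
        · intro he; rw [he] at hnm; exact hnm hrpx.1
      · rw [Set.image_insert_eq, Set.image_insert_eq, Set.image_singleton]
        congr 1
        · exact Prod.ext_iff.2 ⟨hTail _, rfl⟩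
        · rw [hfix2]
          congr 2
          exact Prod.ext_iff.2 ⟨hTail _, rfl⟩
  -- the cover property
  have hCov : IsCherryCover N P := by
    constructor
    · intro s hs
      rcases Set.mem_insert_iff.1 hs with rfl | ⟨S, hS, rfl⟩
      · exact hSnew
      · exact hTransfer S hS
    · intro a b harc hroot
      rcases hCover a b harc hroot with ⟨hmem, hnone⟩ | ⟨e, hme, heroot, hRe, hnot⟩
      · refine ⟨Snew, ⟨Set.mem_insert _ _, hmem⟩, ?_⟩
        rintro T ⟨hT, hab⟩
        rcases Set.mem_insert_iff.1 hT with rfl | ⟨S, hS, rfl⟩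
        · rfl
        · obtain ⟨e, heS, hRe⟩ := hab
          exact absurd hRe (hnone e (hMarcS S hS e heS))
      · obtain ⟨S, ⟨hSP', heS⟩, huniq⟩ := hP'.2 e.1 e.2 hme heroot
        have heS' : e ∈ S := heS
        refine ⟨R '' S, ⟨Set.mem_insert_of_mem _ ⟨S, hSP', rfl⟩, ⟨e, heS', hRe⟩⟩, ?_⟩
        rintro T ⟨hT, hab⟩
        rcases Set.mem_insert_iff.1 hT with rfl | ⟨S', hS', rfl⟩
        · exact absurd hab hnot
        · obtain ⟨e', he'S', hRe'⟩ := hab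
          have : e' = e := hInj _ _ (hMarcS S' hS' e' he'S') hme (hRe'.trans hRe.symm)
          rw [this] at he'S'
          rw [huniq S' ⟨hS', he'S'⟩]
  -- internals of image shapes
  have hIntM : ∀ S ∈ P', ∀ v, v ∈ shapeInternals (R '' S) →
      v ∈ M.verts ∧ v ∈ shapeInternals S := by
    rintro S hS v ⟨w, e, heS, hRe⟩
    have hme := hMarcS S hS e heS
    have hv : v = e.1 := by rw [← hTail e, hRe]
    subst hv
    refine ⟨(M.arc_mem _ _ hme).1, ⟨e.2, ?_⟩⟩
    have : (e.1, e.2) = e := rfl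
    rwa [this]
  -- no aux arc out of Snew
  have hNoOut : ∀ C, ¬ (AuxRel P Snew C) := by
    rintro C ⟨_, hCP, v, hvend, hvint⟩
    rcases Set.mem_insert_iff.1 hCP with rfl | ⟨S, hS, rfl⟩
    · obtain ⟨w, hw⟩ := hvint
      exact hvend.2 w hw
    · obtain ⟨hvM, -⟩ := hIntM S hS v hvint
      obtain ⟨w, e, heS, hRe⟩ := hvint
      have hme := hMarcS S hS e heS
      have hv : v = e.1 := by rw [← hTail e, hRe]
      exact hSink e hme (hv ▸ hvend)
  -- DA transfer
  have hDA : ∀ S1 ∈ P', ∀ S2 ∈ P', DirectlyAbove (R '' S1) (R '' S2) →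
      DirectlyAbove S1 S2 := by
    rintro S1 hS1 S2 hS2 ⟨v, hvend, hvint⟩
    obtain ⟨hvM, hvintS2⟩ := hIntM S2 hS2 v hvint
    obtain ⟨⟨w, e, heS1, hRe⟩, hnotail⟩ := hvend
    have hme := hMarcS S1 hS1 e heS1
    rcases hFix e hme with hfix | hnm
    · rw [hfix] at hRe
      refine ⟨v, ⟨⟨w, hRe ▸ heS1⟩, ?_⟩, hvintS2⟩
      intro y hy
      have hmy := hMarcS S1 hS1 _ hy
      have : (v, (R (v, y)).2) ∈ R '' S1 := by
        refine ⟨(v, y), hy, ?_⟩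
        exact Prod.ext_iff.2 ⟨hTail _, rfl⟩
      exact hnotail _ this
    · exfalso
      have hv2 : v = (R e).2 := by rw [hRe]
      rw [hv2] at hvM
      exact hnm hvM
  -- cycle transfer
  have hacyP : ¬ HasCyclicAux P := by
    rintro ⟨s, hs, hcyc⟩
    have L : ∀ a b, Relation.TransGen (AuxRel P) a b →
        ∀ S1, S1 ∈ P' → a = R '' S1 → ∀ S2, S2 ∈ P' → b = R '' S2 →
        Relation.TransGen (AuxRel P') S1 S2 := by
      intro a b htg
      induction htg with
      | single hab =>
          intro S1 hS1 ha S2 hS2 hb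
          subst ha; subst hb
          exact Relation.TransGen.single ⟨hS1, hS2, hDA S1 hS1 S2 hS2 hab.2.2⟩
      | @tail bmid c h1 hbc ih =>
          intro S1 hS1 ha S2 hS2 hb
          rcases Set.mem_insert_iff.1 hbc.1 with hmid | ⟨Sm, hSm, hmid⟩
          · rw [hmid] at hbc
            exact absurd hbc (hNoOut c)
          · subst hb
            refine Relation.TransGen.tail (ih S1 hS1 ha Sm hSm hmid.symm) ?_
            refine ⟨hSm, hS2, ?_⟩
            rw [← hmid] at hbc
            exact hDA Sm hSm S2 hS2 hbc.2.2
    rcases Set.mem_insert_iff.1 hs with rfl | ⟨S0, hS0, rfl⟩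
    · exact no_cycle_of_no_out hNoOut _ hcyc
    · exact hacy ⟨S0, hS0, L _ _ hcyc S0 hS0 rfl S0 hS0 rfl⟩
  exact ⟨P, hCov, hacyP⟩

end Pullback
section Red1

/-- Rewiring map used in cover pullbacks. -/
def rmap (a b e : ℕ × ℕ) : ℕ × ℕ := if e = a then b else e

lemma rmap_pos (a b : ℕ × ℕ) : rmap a b a = b := if_pos rfl

lemma rmap_neg {a e : ℕ × ℕ} (b : ℕ × ℕ) (h : e ≠ a) : rmap a b e = e := if_neg h

lemma pullback_cherry {N M : Network} {x y : ℕ} (hred : ReducesCherry N M x y) :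
    AcyclicCover M → AcyclicCover N := by
  obtain ⟨p, q, hx, hy, hxy, hpx, hpy, hqp, hverts, hMroot, hiff⟩ := hred
  have hqp_ne : q ≠ p := arc_ne hqp
  have hpx_ne : p ≠ x := arc_ne hpx
  have hpy_ne : p ≠ y := arc_ne hpy
  have hqx : q ≠ x := fun he => leaf_no_child hx (he ▸ hqp)
  have hqy : q ≠ y := fun he => leaf_no_child hy (he ▸ hqp)
  have hpM : p ∉ M.verts := by rw [hverts]; exact Finset.notMem_erase p _
  have hxM : x ∉ M.verts := by
    rw [hverts]
    intro hc
    exact absurd (Finset.mem_of_mem_erase hc) (Finset.notMem_erase x _)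
  have hqN : q ∈ N.verts := (N.arc_mem _ _ hqp).1
  have hqM : q ∈ M.verts := by
    rw [hverts]
    exact Finset.mem_erase.2 ⟨hqp_ne, Finset.mem_erase.2 ⟨hqx, hqN⟩⟩
  have hMqy : M.arc q y = true := (hiff q y).2 (Or.inr ⟨rfl, rfl⟩)
  have hMfilter_y : (M.verts.filter fun u => M.arc u y = true) = {q} := by
    ext u
    simp only [Finset.mem_filter, Finset.mem_singleton]
    constructor
    · rintro ⟨huM, harcu⟩
      rcases (hiff u y).1 harcu with ⟨hn, hup, _, _⟩ | ⟨rfl, _⟩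
      · exact absurd (leaf_parent_unique hy hpy hn) hup
      · rfl
    · rintro rfl
      exact ⟨hqM, hMqy⟩
  have hyNotRetM : ¬ IsRet M y := by
    intro hc
    have := hc.2
    unfold inDeg at this
    rw [hMfilter_y] at this
    simp at this
  have hnoMp : ∀ b : ℕ, ¬ M.arc p b = true := by
    intro b hc
    rcases (hiff p b).1 hc with ⟨_, hne, _, _⟩ | ⟨he, _⟩
    · exact hne rfl
    · exact hqp_ne he.symm
  have hnoqpM : ¬ M.arc q p = true := by
    intro hc
    rcases (hiff q p).1 hc with ⟨_, _, hne, _⟩ | ⟨_, hpy'⟩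
    · exact hne rfl
    · exact hpy_ne hpy'
  refine cover_pullback N M (rmap (q, y) (q, p))
    {(p, x), (p, y)} ?_ ?_ ?_ ?_ ?_ ?_ ?_ ?_ ?_
  · intro e
    by_cases he : e = (q, y)
    · subst he; rw [rmap_pos]
    · rw [rmap_neg _ he]
  · intro e hme
    by_cases he : e = (q, y)
    · subst he; rw [rmap_pos]; exact hqp
    · rw [rmap_neg _ he]
      rcases (hiff e.1 e.2).1 hme with ⟨hn, _, _, _⟩ | ⟨h1, h2⟩
      · exact hn
      · exact absurd (Prod.ext_iff.2 ⟨h1, h2⟩) he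
  · intro e e' hme hme' hR
    by_cases he : e = (q, y) <;> by_cases he' : e' = (q, y)
    · rw [he, he']
    · exfalso
      rw [he, rmap_pos, rmap_neg _ he'] at hR
      rw [← hR] at hme'
      exact hnoqpM hme'
    · exfalso
      rw [he', rmap_pos, rmap_neg _ he] at hR
      rw [hR] at hme
      exact hnoqpM hme
    · rwa [rmap_neg _ he, rmap_neg _ he'] at hR
  · intro e hme
    by_cases he : e = (q, y)
    · right; rw [he, rmap_pos]; exact hpM
    · left; exact rmap_neg _ he
  · intro e hme hret
    by_cases he : e = (q, y)
    · exfalso; rw [he] at hret; exact hyNotRetM hret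
    · exact rmap_neg _ he
  · intro v hv
    have hvy : v ≠ y := fun he => hyNotRetM (he ▸ hv)
    have h2 := hv.2
    unfold inDeg at h2
    obtain ⟨u1, u2, hu12, hfil⟩ := Finset.card_eq_two.1 h2
    have hm1 : M.arc u1 v = true := by
      have : u1 ∈ M.verts.filter fun u => M.arc u v = true := by rw [hfil]; simp
      exact (Finset.mem_filter.1 this).2
    have hm2 : M.arc u2 v = true := by
      have : u2 ∈ M.verts.filter fun u => M.arc u v = true := by rw [hfil]; simp
      exact (Finset.mem_filter.1 this).2
    have hn1 : N.arc u1 v = true := by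
      rcases (hiff u1 v).1 hm1 with ⟨hn, _, _, _⟩ | ⟨_, hvy'⟩
      · exact hn
      · exact absurd hvy' hvy
    have hn2 : N.arc u2 v = true := by
      rcases (hiff u2 v).1 hm2 with ⟨hn, _, _, _⟩ | ⟨_, hvy'⟩
      · exact hn
      · exact absurd hvy' hvy
    exact isRet_of_two_parents hn1 hn2 hu12
  · exact Or.inl ⟨p, x, y, hxy, hpx, hpy, rfl⟩
  · intro a b harc hroot
    have hpdeg : inDeg N p = 1 :=
      indeg_one_of_outdeg_two (N.arc_mem _ _ hpx).1
        (le_antisymm (outDeg_le_two (N.arc_mem _ _ hpx).1) (two_le_outDeg hpx hpy hxy))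
    by_cases hbp : b = p
    · have haq : a = q := inDeg_one_unique hpdeg (by rwa [hbp] at harc) hqp
      right
      refine ⟨(q, y), hMqy, by rw [hMroot, ← haq]; exact hroot, ?_, ?_⟩
      · rw [rmap_pos, haq, hbp]
      · intro hc
        rcases hc with hc | hc
        · exact hqp_ne (haq.symm.trans (congrArg Prod.fst hc))
        · rw [Set.mem_singleton_iff] at hc
          exact hqp_ne (haq.symm.trans (congrArg Prod.fst hc))
    · by_cases hap : a = p
      · subst hap
        left
        constructor
        · rcases child_eq_or hpx hpy hxy harc with rfl | rfl
          · exact Set.mem_insert _ _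
          · exact Set.mem_insert_of_mem _ rfl
        · intro e hme heq
          by_cases he : e = (q, y)
          · rw [he, rmap_pos] at heq
            exact hqp_ne (congrArg Prod.fst heq)
          · rw [rmap_neg _ he] at heq
            rw [heq] at hme
            exact hnoMp b hme
      · by_cases hbx : b = x
        · subst hbx
          exact absurd (leaf_parent_unique hx hpx harc) hap
        · by_cases hby : b = y
          · subst hby
            exact absurd (leaf_parent_unique hy hpy harc) hap
          · right
            have hMab : M.arc a b = true := (hiff a b).2 (Or.inl ⟨harc, hap, hbp, hbx⟩)
            have hne_qy : (a, b) ≠ (q, y) := fun hc => hby (congrArg Prod.snd hc)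
            refine ⟨(a, b), hMab, by rwa [hMroot], rmap_neg _ hne_qy, ?_⟩
            intro hc
            rcases hc with hc | hc
            · exact hap (congrArg Prod.fst hc)
            · rw [Set.mem_singleton_iff] at hc
              exact hap (congrArg Prod.fst hc)
  · intro e hme hend
    obtain ⟨⟨w, hw⟩, _⟩ := hend
    have he1 : e.1 = x ∨ e.1 = y := by
      rcases hw with hc | hc
      · exact Or.inl (congrArg Prod.snd hc)
      · rw [Set.mem_singleton_iff] at hc
        exact Or.inr (congrArg Prod.snd hc)
    rcases he1 with he1 | he1
    · rcases (hiff e.1 e.2).1 hme with ⟨hn, _, _, _⟩ | ⟨h1, _⟩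
      · rw [he1] at hn
        exact leaf_no_child hx hn
      · rw [he1] at h1
        exact hqx h1.symm
    · rcases (hiff e.1 e.2).1 hme with ⟨hn, _, _, _⟩ | ⟨h1, _⟩
      · rw [he1] at hn
        exact leaf_no_child hy hn
      · rw [he1] at h1
        exact hqy h1.symm

end Red1
section Red2

def rmap2 (a b a' b' e : ℕ × ℕ) : ℕ × ℕ := if e = a then b else if e = a' then b' else e

lemma rmap2_pos1 (a b a' b' : ℕ × ℕ) : rmap2 a b a' b' a = b := if_pos rfl

lemma rmap2_pos2 {a a' : ℕ × ℕ} (b b' : ℕ × ℕ) (h : a' ≠ a) :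
    rmap2 a b a' b' a' = b' := by
  unfold rmap2
  rw [if_neg h, if_pos rfl]

lemma rmap2_neg {a a' e : ℕ × ℕ} (b b' : ℕ × ℕ) (h1 : e ≠ a) (h2 : e ≠ a') :
    rmap2 a b a' b' e = e := by
  unfold rmap2
  rw [if_neg h1, if_neg h2]

lemma pullback_retcherry {N M : Network} {x y : ℕ} (hred : ReducesRetCherry N M x y) :
    AcyclicCover M → AcyclicCover N := by
  obtain ⟨px, py, z, q, hx, hy, hrpx, hpxx, hpypx, hpyy, hzpx, hzpy, hqpy, hverts,
    hMroot, hiff⟩ := hred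
  have hypx : y ≠ px := by
    intro he
    have h1 := hy.2.1
    rw [he, hrpx.2] at h1
    omega
  have hpypx_ne : py ≠ px := arc_ne hpypx
  have hpyy_ne : py ≠ y := arc_ne hpyy
  have hzpx_ne : z ≠ px := arc_ne hzpx
  have hqpy_ne : q ≠ py := arc_ne hqpy
  have hpxx_ne : px ≠ x := arc_ne hpxx
  have hpyx : py ≠ x := fun he => leaf_no_child hx (he ▸ hpypx)
  have hzx : z ≠ x := fun he => leaf_no_child hx (he ▸ hzpx)
  have hzy : z ≠ y := fun he => leaf_no_child hy (he ▸ hzpx)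
  have hqx : q ≠ x := fun he => leaf_no_child hx (he ▸ hqpy)
  have hqy : q ≠ y := fun he => leaf_no_child hy (he ▸ hqpy)
  have hqpx : q ≠ px := by
    intro he
    exact hpyx (outDeg_one_unique (ret_outDeg_one hrpx) (he ▸ hqpy) hpxx)
  have hxy : x ≠ y := by
    intro he
    exact hpypx_ne (leaf_parent_unique hy hpyy (he ▸ hpxx)).symm
  have hqyzx : ((q, y) : ℕ × ℕ) ≠ (z, x) := fun hc => hxy (congrArg Prod.snd hc).symm
  have hpxM : px ∉ M.verts := by
    rw [hverts]
    intro hc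
    exact absurd (Finset.mem_of_mem_erase hc) (Finset.notMem_erase px _)
  have hpyM : py ∉ M.verts := by rw [hverts]; exact Finset.notMem_erase py _
  have hzM : z ∈ M.verts := by
    rw [hverts]
    exact Finset.mem_erase.2 ⟨hzpy, Finset.mem_erase.2 ⟨hzpx_ne, (N.arc_mem _ _ hzpx).1⟩⟩
  have hqM : q ∈ M.verts := by
    rw [hverts]
    exact Finset.mem_erase.2 ⟨hqpy_ne, Finset.mem_erase.2 ⟨hqpx, (N.arc_mem _ _ hqpy).1⟩⟩
  have hMzx : M.arc z x = true := (hiff z x).2 (Or.inr (Or.inl ⟨rfl, rfl⟩))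
  have hMqy : M.arc q y = true := (hiff q y).2 (Or.inr (Or.inr ⟨rfl, rfl⟩))
  have hMfil_x : (M.verts.filter fun u => M.arc u x = true) = {z} := by
    ext u
    simp only [Finset.mem_filter, Finset.mem_singleton]
    constructor
    · rintro ⟨huM, harcu⟩
      rcases (hiff u x).1 harcu with ⟨hn, hne1, _, _, _⟩ | ⟨rfl, _⟩ | ⟨_, hxy'⟩
      · exact absurd (leaf_parent_unique hx hpxx hn) hne1
      · rfl
      · exact absurd hxy' hxy
    · rintro rfl
      exact ⟨hzM, hMzx⟩
  have hMfil_y : (M.verts.filter fun u => M.arc u y = true) = {q} := by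
    ext u
    simp only [Finset.mem_filter, Finset.mem_singleton]
    constructor
    · rintro ⟨huM, harcu⟩
      rcases (hiff u y).1 harcu with ⟨hn, _, hne2, _, _⟩ | ⟨_, hyx'⟩ | ⟨rfl, _⟩
      · exact absurd (leaf_parent_unique hy hpyy hn) hne2
      · exact absurd hyx' hxy.symm
      · rfl
    · rintro rfl
      exact ⟨hqM, hMqy⟩
  have hxNotRetM : ¬ IsRet M x := by
    intro hc
    have := hc.2
    unfold inDeg at this
    rw [hMfil_x] at this
    simp at this
  have hyNotRetM : ¬ IsRet M y := by
    intro hc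
    have := hc.2
    unfold inDeg at this
    rw [hMfil_y] at this
    simp at this
  have hnoMpx : ∀ b : ℕ, ¬ M.arc px b = true := by
    intro b hc
    rcases (hiff px b).1 hc with ⟨_, hne, _, _, _⟩ | ⟨h1, _⟩ | ⟨h1, _⟩
    · exact hne rfl
    · exact hzpx_ne h1.symm
    · exact hqpx h1.symm
  have hnoMpy : ∀ b : ℕ, ¬ M.arc py b = true := by
    intro b hc
    rcases (hiff py b).1 hc with ⟨_, _, hne, _, _⟩ | ⟨h1, _⟩ | ⟨h1, _⟩
    · exact hne rfl
    · exact hzpy h1.symm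
    · exact hqpy_ne h1.symm
  have hnoM_into_px : ∀ u : ℕ, ¬ M.arc u px = true := by
    intro u hc
    rcases (hiff u px).1 hc with ⟨_, _, _, hne, _⟩ | ⟨_, h2⟩ | ⟨_, h2⟩
    · exact hne rfl
    · exact hpxx_ne h2
    · exact hypx h2.symm
  have hnoM_into_py : ∀ u : ℕ, ¬ M.arc u py = true := by
    intro u hc
    rcases (hiff u py).1 hc with ⟨_, _, _, _, hne⟩ | ⟨_, h2⟩ | ⟨_, h2⟩
    · exact hne rfl
    · exact hpyx h2
    · exact hpyy_ne h2
  have hpydeg : inDeg N py = 1 :=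
    indeg_one_of_outdeg_two (N.arc_mem _ _ hpypx).1
      (le_antisymm (outDeg_le_two (N.arc_mem _ _ hpypx).1)
        (two_le_outDeg hpypx hpyy (Ne.symm hypx)))
  refine cover_pullback N M (rmap2 (z, x) (z, px) (q, y) (q, py))
    {(px, x), (py, px), (py, y)} ?_ ?_ ?_ ?_ ?_ ?_ ?_ ?_ ?_
  · intro e
    by_cases he : e = (z, x)
    · subst he; rw [rmap2_pos1]
    · by_cases he2 : e = (q, y)
      · subst he2; rw [rmap2_pos2 _ _ hqyzx]
      · rw [rmap2_neg _ _ he he2]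
  · intro e hme
    by_cases he : e = (z, x)
    · subst he; rw [rmap2_pos1]; exact hzpx
    · by_cases he2 : e = (q, y)
      · subst he2; rw [rmap2_pos2 _ _ hqyzx]; exact hqpy
      · rw [rmap2_neg _ _ he he2]
        rcases (hiff e.1 e.2).1 hme with ⟨hn, _, _, _, _⟩ | ⟨h1, h2⟩ | ⟨h1, h2⟩
        · exact hn
        · exact absurd (Prod.ext_iff.2 ⟨h1, h2⟩) he
        · exact absurd (Prod.ext_iff.2 ⟨h1, h2⟩) he2
  · intro e e' hme hme' hR
    by_cases he : e = (z, x)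
    · by_cases he' : e' = (z, x)
      · rw [he, he']
      · by_cases he2' : e' = (q, y)
        · exfalso
          rw [he, rmap2_pos1, he2', rmap2_pos2 _ _ hqyzx] at hR
          exact hpypx_ne (congrArg Prod.snd hR).symm
        · exfalso
          rw [he, rmap2_pos1, rmap2_neg _ _ he' he2'] at hR
          rw [← hR] at hme'
          exact hnoM_into_px z hme'
    · by_cases he2 : e = (q, y)
      · by_cases he2' : e' = (q, y)
        · rw [he2, he2']
        · by_cases he' : e' = (z, x)
          · exfalso
            rw [he2, rmap2_pos2 _ _ hqyzx, he', rmap2_pos1] at hR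
            exact hpypx_ne (congrArg Prod.snd hR)
          · exfalso
            rw [he2, rmap2_pos2 _ _ hqyzx, rmap2_neg _ _ he' he2'] at hR
            rw [← hR] at hme'
            exact hnoM_into_py q hme'
      · by_cases he' : e' = (z, x)
        · exfalso
          rw [he', rmap2_pos1, rmap2_neg _ _ he he2] at hR
          rw [hR] at hme
          exact hnoM_into_px z hme
        · by_cases he2' : e' = (q, y)
          · exfalso
            rw [he2', rmap2_pos2 _ _ hqyzx, rmap2_neg _ _ he he2] at hR
            rw [hR] at hme
            exact hnoM_into_py q hme
          · rwa [rmap2_neg _ _ he he2, rmap2_neg _ _ he' he2'] at hR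
  · intro e hme
    by_cases he : e = (z, x)
    · right; rw [he, rmap2_pos1]; exact hpxM
    · by_cases he2 : e = (q, y)
      · right; rw [he2, rmap2_pos2 _ _ hqyzx]; exact hpyM
      · left; exact rmap2_neg _ _ he he2
  · intro e hme hret
    by_cases he : e = (z, x)
    · exfalso; rw [he] at hret; exact hxNotRetM hret
    · by_cases he2 : e = (q, y)
      · exfalso; rw [he2] at hret; exact hyNotRetM hret
      · exact rmap2_neg _ _ he he2
  · intro v hv
    have hvx : v ≠ x := fun he => hxNotRetM (he ▸ hv)
    have hvy : v ≠ y := fun he => hyNotRetM (he ▸ hv)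
    have h2 := hv.2
    unfold inDeg at h2
    obtain ⟨u1, u2, hu12, hfil⟩ := Finset.card_eq_two.1 h2
    have hm1 : M.arc u1 v = true := by
      have : u1 ∈ M.verts.filter fun u => M.arc u v = true := by rw [hfil]; simp
      exact (Finset.mem_filter.1 this).2
    have hm2 : M.arc u2 v = true := by
      have : u2 ∈ M.verts.filter fun u => M.arc u v = true := by rw [hfil]; simp
      exact (Finset.mem_filter.1 this).2
    have hn1 : N.arc u1 v = true := by
      rcases (hiff u1 v).1 hm1 with ⟨hn, _, _, _, _⟩ | ⟨_, hv'⟩ | ⟨_, hv'⟩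
      · exact hn
      · exact absurd hv' hvx
      · exact absurd hv' hvy
    have hn2 : N.arc u2 v = true := by
      rcases (hiff u2 v).1 hm2 with ⟨hn, _, _, _, _⟩ | ⟨_, hv'⟩ | ⟨_, hv'⟩
      · exact hn
      · exact absurd hv' hvx
      · exact absurd hv' hvy
    exact isRet_of_two_parents hn1 hn2 hu12
  · exact Or.inr ⟨x, y, px, py, hrpx, hpxx, hpypx, hpyy, hypx, rfl⟩
  · intro a b harc hroot
    by_cases hbpx : b = px
    · rcases parent_eq_or hpypx hzpx (Ne.symm hzpy) (by rwa [hbpx] at harc)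
        with hapy | haz
      · left
        constructor
        · rw [hapy, hbpx]
          exact Set.mem_insert_of_mem _ (Set.mem_insert _ _)
        · intro e hme heq
          by_cases he : e = (z, x)
          · rw [he, rmap2_pos1] at heq
            exact hzpy ((congrArg Prod.fst heq).trans hapy)
          · by_cases he2 : e = (q, y)
            · rw [he2, rmap2_pos2 _ _ hqyzx] at heq
              exact hpypx_ne ((congrArg Prod.snd heq).trans hbpx)
            · rw [rmap2_neg _ _ he he2] at heq
              rw [heq] at hme
              exact hnoMpy b (by rwa [hapy] at hme)
      · right
        refine ⟨(z, x), hMzx, by rw [hMroot, ← haz]; exact hroot, ?_, ?_⟩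
        · rw [rmap2_pos1, haz, hbpx]
        · intro hc
          simp only [Set.mem_insert_iff, Set.mem_singleton_iff] at hc
          rcases hc with hc | hc | hc
          · exact hzpx_ne (haz.symm.trans (congrArg Prod.fst hc))
          · exact hzpy (haz.symm.trans (congrArg Prod.fst hc))
          · exact hzpy (haz.symm.trans (congrArg Prod.fst hc))
    · by_cases hapx : a = px
      · have hbx : b = x :=
          outDeg_one_unique (ret_outDeg_one hrpx) (by rwa [hapx] at harc) hpxx
        left
        constructor
        · rw [hapx, hbx]
          exact Set.mem_insert _ _
        · intro e hme heq
          by_cases he : e = (z, x)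
          · rw [he, rmap2_pos1] at heq
            exact hpxx_ne ((congrArg Prod.snd heq).trans hbx)
          · by_cases he2 : e = (q, y)
            · rw [he2, rmap2_pos2 _ _ hqyzx] at heq
              exact hpyx ((congrArg Prod.snd heq).trans hbx)
            · rw [rmap2_neg _ _ he he2] at heq
              rw [heq] at hme
              exact hnoMpx b (by rwa [hapx] at hme)
      · by_cases hbpy : b = py
        · have haq : a = q := inDeg_one_unique hpydeg (by rwa [hbpy] at harc) hqpy
          right
          refine ⟨(q, y), hMqy, by rw [hMroot, ← haq]; exact hroot, ?_, ?_⟩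
          · rw [rmap2_pos2 _ _ hqyzx, haq, hbpy]
          · intro hc
            simp only [Set.mem_insert_iff, Set.mem_singleton_iff] at hc
            rcases hc with hc | hc | hc
            · exact hqpx (haq.symm.trans (congrArg Prod.fst hc))
            · exact hqpy_ne (haq.symm.trans (congrArg Prod.fst hc))
            · exact hqpy_ne (haq.symm.trans (congrArg Prod.fst hc))
        · by_cases hapy : a = py
          · rcases child_eq_or hpypx hpyy (Ne.symm hypx) (by rwa [hapy] at harc)
              with hbpx' | hby
            · exact absurd hbpx' hbpx
            · left
              constructor
              · rw [hapy, hby]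
                exact Set.mem_insert_of_mem _ (Set.mem_insert_of_mem _ rfl)
              · intro e hme heq
                by_cases he : e = (z, x)
                · rw [he, rmap2_pos1] at heq
                  exact hzpy ((congrArg Prod.fst heq).trans hapy)
                · by_cases he2 : e = (q, y)
                  · rw [he2, rmap2_pos2 _ _ hqyzx] at heq
                    exact hqpy_ne ((congrArg Prod.fst heq).trans hapy)
                  · rw [rmap2_neg _ _ he he2] at heq
                    rw [heq] at hme
                    exact hnoMpy b (by rwa [hapy] at hme)
          · by_cases hbx : b = x
            · exact absurd (leaf_parent_unique hx hpxx (by rwa [hbx] at harc)) hapx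
            · by_cases hby : b = y
              · exact absurd (leaf_parent_unique hy hpyy (by rwa [hby] at harc)) hapy
              · right
                have hMab : M.arc a b = true :=
                  (hiff a b).2 (Or.inl ⟨harc, hapx, hapy, hbpx, hbpy⟩)
                have hne1 : ((a, b) : ℕ × ℕ) ≠ (z, x) :=
                  fun hc => hbx (congrArg Prod.snd hc)
                have hne2 : ((a, b) : ℕ × ℕ) ≠ (q, y) :=
                  fun hc => hby (congrArg Prod.snd hc)
                refine ⟨(a, b), hMab, by rwa [hMroot], rmap2_neg _ _ hne1 hne2, ?_⟩
                intro hc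
                simp only [Set.mem_insert_iff, Set.mem_singleton_iff] at hc
                rcases hc with hc | hc | hc
                · exact hapx (congrArg Prod.fst hc)
                · exact hapy (congrArg Prod.fst hc)
                · exact hapy (congrArg Prod.fst hc)
  · intro e hme hend
    obtain ⟨⟨w, hw⟩, hno⟩ := hend
    simp only [Set.mem_insert_iff, Set.mem_singleton_iff] at hw
    rcases hw with hc | hc | hc
    · have he1 : e.1 = x := congrArg Prod.snd hc
      rcases (hiff e.1 e.2).1 hme with ⟨hn, _, _, _, _⟩ | ⟨h1, _⟩ | ⟨h1, _⟩
      · exact leaf_no_child hx (by rwa [he1] at hn)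
      · exact hzx (h1.symm.trans he1)
      · exact hqx (h1.symm.trans he1)
    · have he1 : e.1 = px := congrArg Prod.snd hc
      exact hno x (by rw [he1]; exact Set.mem_insert _ _)
    · have he1 : e.1 = y := congrArg Prod.snd hc
      rcases (hiff e.1 e.2).1 hme with ⟨hn, _, _, _, _⟩ | ⟨h1, _⟩ | ⟨h1, _⟩
      · exact leaf_no_child hy (by rwa [he1] at hn)
      · exact hzy (h1.symm.trans he1)
      · exact hqy (h1.symm.trans he1)

end Red2
section Final

lemma acyclicCover_of_orchard {N : Network} (h : IsOrchard N) : AcyclicCover N := by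
  obtain ⟨N', hsteps, hleaf⟩ := h
  have base := acyclicCover_of_singleLeaf hleaf
  induction hsteps using Relation.ReflTransGen.head_induction_on with
  | refl => exact base
  | head hstep _ ih =>
      obtain ⟨x, y, hred | hred⟩ := hstep
      · exact pullback_cherry hred ih
      · exact pullback_retcherry hred ih

end Final
/-- If a tree-based network has two N-fences of length ≥ 3 with
directed paths from `head(a^u_h)` to `tail(a^v_i)` and from `head(a^v_j)` to
`tail(a^u_k)` for even `h, i, j, k` with `k < h` and `i < j`, then the auxiliary
graph of every cherry cover contains a directed cycle, and `N` is not orchard.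
(Lists are 0-indexed: `a_m` is entry `m - 1`.) -/
theorem nfence_paths_force_cyclic_cover (N : Network) (hTB : IsTreeBased N)
    (A B : List (ℕ × ℕ)) (hA : IsNFence N A) (hB : IsNFence N B)
    (hA3 : 3 ≤ A.length) (hB3 : 3 ≤ B.length)
    (hAord : IsRet N ((A.headD (0, 0)).1)) (hBord : IsRet N ((B.headD (0, 0)).1))
    (h i j k : ℕ)
    (hh : Even h) (hi : Even i) (hj : Even j) (hk : Even k)
    (hk1 : 1 ≤ k) (hi1 : 1 ≤ i) (hkh : k < h) (hij : i < j)
    (hhA : h ≤ A.length) (hjB : j ≤ B.length)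
    (path1 : Relation.ReflTransGen (fun a b : ℕ => N.arc a b = true)
      ((A.getD (h - 1) (0, 0)).2) ((B.getD (i - 1) (0, 0)).1))
    (path2 : Relation.ReflTransGen (fun a b : ℕ => N.arc a b = true)
      ((B.getD (j - 1) (0, 0)).2) ((A.getD (k - 1) (0, 0)).1)) :
    (∀ P : Set (Set (ℕ × ℕ)), IsCherryCover N P → HasCyclicAux P) ∧
      ¬ IsOrchard N := by
  have hpart1 := part1 N A B hA hB hAord hBord h i j k hh hi hj hk hk1 hi1 hkh hij
    hhA hjB path1 path2
  refine ⟨hpart1, ?_⟩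
  intro horch
  obtain ⟨P, hP, hacy⟩ := acyclicCover_of_orchard horch
  exact hacy (hpart1 P hP)

end PhyloNet
end

section
/- In a binary tree-based phylogenetic network, any cherry cover assigns exactly one of the two incoming arcs of each reticulation to be the middle arc of a reticulated cherry shape. -/
namespace PhyloNet

/-- In a tree-based network, any cherry cover assigns exactly one
of the two incoming arcs of each reticulation to be the middle arc of a
reticulated cherry shape. -/
theorem unique_middle_arc (N : Network) (hTB : IsTreeBased N)
    (P : Set (Set (ℕ × ℕ))) (hP : IsCherryCover N P) (r : ℕ) (hr : IsRet N r) :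
    ∃! u : ℕ, N.arc u r = true ∧ ∃ s ∈ P, IsMiddleArcOf N s u r := by
  obtain ⟨hrv, hdeg⟩ := hr
  -- r is not the root
  have hrroot : r ≠ N.root := by
    intro h
    have h0 := N.root_indeg
    unfold inDeg at hdeg
    rw [h] at hdeg
    omega
  -- outdegree of r is 1
  have hout : (N.verts.filter fun w => N.arc r w = true).card = 1 := by
    rcases N.nonroot_deg r hrv hrroot with ⟨h1, _⟩ | ⟨_, h2⟩ | ⟨h1, _⟩
    · unfold inDeg at hdeg; omega
    · exact h2
    · unfold inDeg at hdeg; omega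
  obtain ⟨c, hcfilt⟩ := Finset.card_eq_one.mp hout
  have hrc : N.arc r c = true := by
    have : c ∈ N.verts.filter fun w => N.arc r w = true := by
      rw [hcfilt]; exact Finset.mem_singleton_self c
    exact (Finset.mem_filter.mp this).2
  have huniq_out : ∀ w : ℕ, N.arc r w = true → w = c := by
    intro w hw
    have : w ∈ N.verts.filter fun z => N.arc r z = true :=
      Finset.mem_filter.mpr ⟨(N.arc_mem r w hw).2, hw⟩
    rw [hcfilt] at this
    exact Finset.mem_singleton.mp this
  -- the arc (r, c) is covered by a unique shape s
  obtain ⟨s, ⟨hsP, hsmem⟩, hsuniq⟩ := hP.2 r c hrc hrroot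
  rcases hP.1 s hsP with ⟨p, x, y, hxy, hpx, hpy, hseq⟩ |
    ⟨x, y, px, py, hpxret, h1, h2, h3, hynpx, hseq⟩
  · -- cherry shape containing (r,c): impossible, r would have outdegree 2
    exfalso
    rw [hseq] at hsmem
    simp only [Set.mem_insert_iff, Set.mem_singleton_iff, Prod.mk.injEq] at hsmem
    rcases hsmem with ⟨hp, _⟩ | ⟨hp, _⟩ <;>
    · subst hp
      exact hxy ((huniq_out x hpx).trans (huniq_out y hpy).symm)
  · rw [hseq] at hsmem
    simp only [Set.mem_insert_iff, Set.mem_singleton_iff, Prod.mk.injEq] at hsmem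
    rcases hsmem with ⟨hp, hq⟩ | ⟨hp, hq⟩ | ⟨hp, hq⟩
    · -- (r,c) = (px, x): the top arc of a reticulated cherry shape
      subst hp; subst hq
      -- so (py, r) is a middle arc; existence witness py
      refine ⟨py, ⟨h2, s, hsP, c, y, ⟨hrv, hdeg⟩, h1, h2, h3, hynpx, hseq⟩, ?_⟩
      intro u' ⟨hu'arc, s', hs'P, x', y', _, harcrx', harcur', harcu'y', hy'ne, hs'eq⟩
      have hx'c : x' = c := huniq_out x' harcrx'
      subst hx'c
      have hrcs' : (r, x') ∈ s' := by rw [hs'eq]; left; rfl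
      have hss' : s' = s := hsuniq s' ⟨hs'P, hrcs'⟩
      have hurs : (u', r) ∈ s := by
        rw [← hss', hs'eq]; right; left; rfl
      rw [hseq] at hurs
      simp only [Set.mem_insert_iff, Set.mem_singleton_iff, Prod.mk.injEq] at hurs
      rcases hurs with ⟨hu, hr2⟩ | ⟨hu, hr2⟩ | ⟨hu, hr2⟩
      · exfalso
        rw [hu, hr2] at hu'arc
        exact N.acyclic _ (Relation.TransGen.single hu'arc)
      · exact hu
      · exact hu
    · -- (r,c) = (py, px): r would have two outgoing arcs
      exfalso
      subst hp
      exact hynpx ((huniq_out y h3).trans (huniq_out px h2).symm)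
    · -- (r,c) = (py, y): r would have two outgoing arcs
      exfalso
      subst hp
      exact hynpx ((huniq_out y h3).trans (huniq_out px h2).symm)


end PhyloNet
end

section
/- If a network N_G is obtained from a 3-regular graph G by the vertex-cover reduction, then N_G is tree-based. -/
namespace PhyloNet

/-- The network obtained from a 3-regular graph by the vertex-cover
reduction is tree-based. -/
theorem vcReduction_treeBased {α : Type} [Fintype α] [DecidableEq α]
    (G : SimpleGraph α) [DecidableRel G.Adj] (hreg : G.IsRegularOfDegree 3)
    (N : Network) (hred : IsVCReduction G N) : IsTreeBased N := by
  classical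
  obtain ⟨R, W, L, M, P, S, rho, e, pi, tau, he, hpi, hpiInj, htau, htauInj,
    hinj, hroot, hverts, harc⟩ := hred
  set n := Fintype.card α with hn
  -- distinctness lemmas from injectivity
  have hRW : ∀ (v u : α) (i j : ℕ), i ≤ 7 → 1 ≤ j → j ≤ 7 → R v i ≠ W u j := by
    intro v u i j hi hj1 hj7 h
    obtain ⟨k, rfl⟩ : ∃ k, j = k + 1 := ⟨j - 1, by omega⟩
    exact absurd (hinj (a₁ := Sum.inl (v, ⟨i, by omega⟩))
      (a₂ := Sum.inr (Sum.inl (u, ⟨k, by omega⟩))) h) (by simp)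
  have hRL : ∀ (v u : α) (i j : ℕ), i ≤ 7 → 1 ≤ j → j ≤ 5 → R v i ≠ L u j := by
    intro v u i j hi hj1 hj5 h
    obtain ⟨k, rfl⟩ : ∃ k, j = k + 1 := ⟨j - 1, by omega⟩
    exact absurd (hinj (a₁ := Sum.inl (v, ⟨i, by omega⟩))
      (a₂ := Sum.inr (Sum.inr (Sum.inl (u, ⟨k, by omega⟩)))) h) (by simp)
  have hRM : ∀ (v u : α) (i j : ℕ), i ≤ 7 → 1 ≤ j → j ≤ 4 → R v i ≠ M u j := by
    intro v u i j hi hj1 hj4 h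
    obtain ⟨k, rfl⟩ : ∃ k, j = k + 1 := ⟨j - 1, by omega⟩
    exact absurd (hinj (a₁ := Sum.inl (v, ⟨i, by omega⟩))
      (a₂ := Sum.inr (Sum.inr (Sum.inr (Sum.inl (u, ⟨k, by omega⟩))))) h) (by simp)
  have hRP : ∀ (v u : α) (i : ℕ), i ≤ 7 → R v i ≠ P u := by
    intro v u i hi h
    exact absurd (hinj (a₁ := Sum.inl (v, ⟨i, by omega⟩))
      (a₂ := Sum.inr (Sum.inr (Sum.inr (Sum.inr (Sum.inl u))))) h) (by simp)
  have hRS : ∀ (v : α) (i j : ℕ), i ≤ 7 → 1 ≤ j → j ≤ n - 1 → R v i ≠ S j := by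
    intro v i j hi hj1 hjn h
    obtain ⟨k, rfl⟩ : ∃ k, j = k + 1 := ⟨j - 1, by omega⟩
    exact absurd (hinj (a₁ := Sum.inl (v, ⟨i, by omega⟩))
      (a₂ := Sum.inr (Sum.inr (Sum.inr (Sum.inr (Sum.inr (Sum.inl ⟨k, by omega⟩)))))) h)
      (by simp)
  have hRrho : ∀ (v : α) (i : ℕ), i ≤ 7 → R v i ≠ rho := by
    intro v i hi h
    exact absurd (hinj (a₁ := Sum.inl (v, ⟨i, by omega⟩))
      (a₂ := Sum.inr (Sum.inr (Sum.inr (Sum.inr (Sum.inr (Sum.inr ())))))) h) (by simp)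
  have hWL : ∀ (v u : α) (i j : ℕ), 1 ≤ i → i ≤ 7 → 1 ≤ j → j ≤ 5 → W v i ≠ L u j := by
    intro v u i j hi1 hi7 hj1 hj5 h
    obtain ⟨k, rfl⟩ : ∃ k, i = k + 1 := ⟨i - 1, by omega⟩
    obtain ⟨l, rfl⟩ : ∃ l, j = l + 1 := ⟨j - 1, by omega⟩
    exact absurd (hinj (a₁ := Sum.inr (Sum.inl (v, ⟨k, by omega⟩)))
      (a₂ := Sum.inr (Sum.inr (Sum.inl (u, ⟨l, by omega⟩)))) h) (by simp)
  have hWM : ∀ (v u : α) (i j : ℕ), 1 ≤ i → i ≤ 7 → 1 ≤ j → j ≤ 4 → W v i ≠ M u j := by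
    intro v u i j hi1 hi7 hj1 hj4 h
    obtain ⟨k, rfl⟩ : ∃ k, i = k + 1 := ⟨i - 1, by omega⟩
    obtain ⟨l, rfl⟩ : ∃ l, j = l + 1 := ⟨j - 1, by omega⟩
    exact absurd (hinj (a₁ := Sum.inr (Sum.inl (v, ⟨k, by omega⟩)))
      (a₂ := Sum.inr (Sum.inr (Sum.inr (Sum.inl (u, ⟨l, by omega⟩))))) h) (by simp)
  have hWP : ∀ (v u : α) (i : ℕ), 1 ≤ i → i ≤ 7 → W v i ≠ P u := by
    intro v u i hi1 hi7 h
    obtain ⟨k, rfl⟩ : ∃ k, i = k + 1 := ⟨i - 1, by omega⟩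
    exact absurd (hinj (a₁ := Sum.inr (Sum.inl (v, ⟨k, by omega⟩)))
      (a₂ := Sum.inr (Sum.inr (Sum.inr (Sum.inr (Sum.inl u))))) h) (by simp)
  have hWS : ∀ (v : α) (i j : ℕ), 1 ≤ i → i ≤ 7 → 1 ≤ j → j ≤ n - 1 → W v i ≠ S j := by
    intro v i j hi1 hi7 hj1 hjn h
    obtain ⟨k, rfl⟩ : ∃ k, i = k + 1 := ⟨i - 1, by omega⟩
    obtain ⟨l, rfl⟩ : ∃ l, j = l + 1 := ⟨j - 1, by omega⟩
    exact absurd (hinj (a₁ := Sum.inr (Sum.inl (v, ⟨k, by omega⟩)))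
      (a₂ := Sum.inr (Sum.inr (Sum.inr (Sum.inr (Sum.inr (Sum.inl ⟨l, by omega⟩)))))) h)
      (by simp)
  have hWrho : ∀ (v : α) (i : ℕ), 1 ≤ i → i ≤ 7 → W v i ≠ rho := by
    intro v i hi1 hi7 h
    obtain ⟨k, rfl⟩ : ∃ k, i = k + 1 := ⟨i - 1, by omega⟩
    exact absurd (hinj (a₁ := Sum.inr (Sum.inl (v, ⟨k, by omega⟩)))
      (a₂ := Sum.inr (Sum.inr (Sum.inr (Sum.inr (Sum.inr (Sum.inr ())))))) h) (by simp)
  have hLM : ∀ (v u : α) (i j : ℕ), 1 ≤ i → i ≤ 5 → 1 ≤ j → j ≤ 4 → L v i ≠ M u j := by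
    intro v u i j hi1 hi5 hj1 hj4 h
    obtain ⟨k, rfl⟩ : ∃ k, i = k + 1 := ⟨i - 1, by omega⟩
    obtain ⟨l, rfl⟩ : ∃ l, j = l + 1 := ⟨j - 1, by omega⟩
    exact absurd (hinj (a₁ := Sum.inr (Sum.inr (Sum.inl (v, ⟨k, by omega⟩))))
      (a₂ := Sum.inr (Sum.inr (Sum.inr (Sum.inl (u, ⟨l, by omega⟩))))) h) (by simp)
  have hLP : ∀ (v u : α) (i : ℕ), 1 ≤ i → i ≤ 5 → L v i ≠ P u := by
    intro v u i hi1 hi5 h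
    obtain ⟨k, rfl⟩ : ∃ k, i = k + 1 := ⟨i - 1, by omega⟩
    exact absurd (hinj (a₁ := Sum.inr (Sum.inr (Sum.inl (v, ⟨k, by omega⟩))))
      (a₂ := Sum.inr (Sum.inr (Sum.inr (Sum.inr (Sum.inl u))))) h) (by simp)
  have hLS : ∀ (v : α) (i j : ℕ), 1 ≤ i → i ≤ 5 → 1 ≤ j → j ≤ n - 1 → L v i ≠ S j := by
    intro v i j hi1 hi5 hj1 hjn h
    obtain ⟨k, rfl⟩ : ∃ k, i = k + 1 := ⟨i - 1, by omega⟩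
    obtain ⟨l, rfl⟩ : ∃ l, j = l + 1 := ⟨j - 1, by omega⟩
    exact absurd (hinj (a₁ := Sum.inr (Sum.inr (Sum.inl (v, ⟨k, by omega⟩))))
      (a₂ := Sum.inr (Sum.inr (Sum.inr (Sum.inr (Sum.inr (Sum.inl ⟨l, by omega⟩)))))) h)
      (by simp)
  have hLrho : ∀ (v : α) (i : ℕ), 1 ≤ i → i ≤ 5 → L v i ≠ rho := by
    intro v i hi1 hi5 h
    obtain ⟨k, rfl⟩ : ∃ k, i = k + 1 := ⟨i - 1, by omega⟩
    exact absurd (hinj (a₁ := Sum.inr (Sum.inr (Sum.inl (v, ⟨k, by omega⟩))))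
      (a₂ := Sum.inr (Sum.inr (Sum.inr (Sum.inr (Sum.inr (Sum.inr ())))))) h) (by simp)
  have hMP : ∀ (v u : α) (i : ℕ), 1 ≤ i → i ≤ 4 → M v i ≠ P u := by
    intro v u i hi1 hi4 h
    obtain ⟨k, rfl⟩ : ∃ k, i = k + 1 := ⟨i - 1, by omega⟩
    exact absurd (hinj (a₁ := Sum.inr (Sum.inr (Sum.inr (Sum.inl (v, ⟨k, by omega⟩)))))
      (a₂ := Sum.inr (Sum.inr (Sum.inr (Sum.inr (Sum.inl u))))) h) (by simp)
  have hMS : ∀ (v : α) (i j : ℕ), 1 ≤ i → i ≤ 4 → 1 ≤ j → j ≤ n - 1 → M v i ≠ S j := by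
    intro v i j hi1 hi4 hj1 hjn h
    obtain ⟨k, rfl⟩ : ∃ k, i = k + 1 := ⟨i - 1, by omega⟩
    obtain ⟨l, rfl⟩ : ∃ l, j = l + 1 := ⟨j - 1, by omega⟩
    exact absurd (hinj (a₁ := Sum.inr (Sum.inr (Sum.inr (Sum.inl (v, ⟨k, by omega⟩)))))
      (a₂ := Sum.inr (Sum.inr (Sum.inr (Sum.inr (Sum.inr (Sum.inl ⟨l, by omega⟩)))))) h)
      (by simp)
  have hMrho : ∀ (v : α) (i : ℕ), 1 ≤ i → i ≤ 4 → M v i ≠ rho := by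
    intro v i hi1 hi4 h
    obtain ⟨k, rfl⟩ : ∃ k, i = k + 1 := ⟨i - 1, by omega⟩
    exact absurd (hinj (a₁ := Sum.inr (Sum.inr (Sum.inr (Sum.inl (v, ⟨k, by omega⟩)))))
      (a₂ := Sum.inr (Sum.inr (Sum.inr (Sum.inr (Sum.inr (Sum.inr ())))))) h) (by simp)
  have hPS : ∀ (v : α) (j : ℕ), 1 ≤ j → j ≤ n - 1 → P v ≠ S j := by
    intro v j hj1 hjn h
    obtain ⟨l, rfl⟩ : ∃ l, j = l + 1 := ⟨j - 1, by omega⟩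
    exact absurd (hinj (a₁ := Sum.inr (Sum.inr (Sum.inr (Sum.inr (Sum.inl v)))))
      (a₂ := Sum.inr (Sum.inr (Sum.inr (Sum.inr (Sum.inr (Sum.inl ⟨l, by omega⟩)))))) h)
      (by simp)
  have hPrho : ∀ (v : α), P v ≠ rho := by
    intro v h
    exact absurd (hinj (a₁ := Sum.inr (Sum.inr (Sum.inr (Sum.inr (Sum.inl v)))))
      (a₂ := Sum.inr (Sum.inr (Sum.inr (Sum.inr (Sum.inr (Sum.inr ())))))) h) (by simp)
  have hSrho : ∀ (j : ℕ), 1 ≤ j → j ≤ n - 1 → S j ≠ rho := by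
    intro j hj1 hjn h
    obtain ⟨l, rfl⟩ : ∃ l, j = l + 1 := ⟨j - 1, by omega⟩
    exact absurd (hinj (a₁ := Sum.inr (Sum.inr (Sum.inr (Sum.inr (Sum.inr (Sum.inl ⟨l, by omega⟩))))))
      (a₂ := Sum.inr (Sum.inr (Sum.inr (Sum.inr (Sum.inr (Sum.inr ())))))) h) (by simp)
  have hRR : ∀ (v u : α) (i j : ℕ), i ≤ 7 → j ≤ 7 → R v i = R u j → v = u ∧ i = j := by
    intro v u i j hi hj h
    have := hinj (a₁ := Sum.inl (v, ⟨i, by omega⟩)) (a₂ := Sum.inl (u, ⟨j, by omega⟩)) h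
    simp [Prod.ext_iff, Fin.ext_iff] at this
    exact this
  have hWW : ∀ (v u : α) (i j : ℕ), 1 ≤ i → i ≤ 7 → 1 ≤ j → j ≤ 7 →
      W v i = W u j → v = u ∧ i = j := by
    intro v u i j hi1 hi7 hj1 hj7 h
    obtain ⟨k, rfl⟩ : ∃ k, i = k + 1 := ⟨i - 1, by omega⟩
    obtain ⟨l, rfl⟩ : ∃ l, j = l + 1 := ⟨j - 1, by omega⟩
    have := hinj (a₁ := Sum.inr (Sum.inl (v, ⟨k, by omega⟩)))
      (a₂ := Sum.inr (Sum.inl (u, ⟨l, by omega⟩))) h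
    simp [Prod.ext_iff, Fin.ext_iff] at this
    exact ⟨this.1, by omega⟩
  have hLL : ∀ (v u : α) (i j : ℕ), 1 ≤ i → i ≤ 5 → 1 ≤ j → j ≤ 5 →
      L v i = L u j → v = u ∧ i = j := by
    intro v u i j hi1 hi5 hj1 hj5 h
    obtain ⟨k, rfl⟩ : ∃ k, i = k + 1 := ⟨i - 1, by omega⟩
    obtain ⟨l, rfl⟩ : ∃ l, j = l + 1 := ⟨j - 1, by omega⟩
    have := hinj (a₁ := Sum.inr (Sum.inr (Sum.inl (v, ⟨k, by omega⟩))))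
      (a₂ := Sum.inr (Sum.inr (Sum.inl (u, ⟨l, by omega⟩)))) h
    simp [Prod.ext_iff, Fin.ext_iff] at this
    exact ⟨this.1, by omega⟩
  have hMM : ∀ (v u : α) (i j : ℕ), 1 ≤ i → i ≤ 4 → 1 ≤ j → j ≤ 4 →
      M v i = M u j → v = u ∧ i = j := by
    intro v u i j hi1 hi4 hj1 hj4 h
    obtain ⟨k, rfl⟩ : ∃ k, i = k + 1 := ⟨i - 1, by omega⟩
    obtain ⟨l, rfl⟩ : ∃ l, j = l + 1 := ⟨j - 1, by omega⟩
    have := hinj (a₁ := Sum.inr (Sum.inr (Sum.inr (Sum.inl (v, ⟨k, by omega⟩)))))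
      (a₂ := Sum.inr (Sum.inr (Sum.inr (Sum.inl (u, ⟨l, by omega⟩))))) h
    simp [Prod.ext_iff, Fin.ext_iff] at this
    exact ⟨this.1, by omega⟩
  have hPP : ∀ (v u : α), P v = P u → v = u := by
    intro v u h
    have := hinj (a₁ := Sum.inr (Sum.inr (Sum.inr (Sum.inr (Sum.inl v)))))
      (a₂ := Sum.inr (Sum.inr (Sum.inr (Sum.inr (Sum.inl u))))) h
    simpa using this
  have hSS : ∀ (i j : ℕ), 1 ≤ i → i ≤ n - 1 → 1 ≤ j → j ≤ n - 1 → S i = S j → i = j := by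
    intro i j hi1 hin hj1 hjn h
    obtain ⟨k, rfl⟩ : ∃ k, i = k + 1 := ⟨i - 1, by omega⟩
    obtain ⟨l, rfl⟩ : ∃ l, j = l + 1 := ⟨j - 1, by omega⟩
    have := hinj (a₁ := Sum.inr (Sum.inr (Sum.inr (Sum.inr (Sum.inr (Sum.inl ⟨k, by omega⟩))))))
      (a₂ := Sum.inr (Sum.inr (Sum.inr (Sum.inr (Sum.inr (Sum.inl ⟨l, by omega⟩)))))) h
    simp [Fin.ext_iff] at this
    omega
  -- membership helpers
  have hvR : ∀ (v : α) (i : ℕ), i ≤ 7 → R v i ∈ N.verts :=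
    fun v i hi => (hverts _).2 (Or.inl ⟨v, i, hi, rfl⟩)
  have hvW : ∀ (v : α) (i : ℕ), 1 ≤ i → i ≤ 7 → W v i ∈ N.verts :=
    fun v i h1 h7 => (hverts _).2 (Or.inr (Or.inl ⟨v, i, h1, h7, rfl⟩))
  have hvL : ∀ (v : α) (i : ℕ), 1 ≤ i → i ≤ 5 → L v i ∈ N.verts :=
    fun v i h1 h5 => (hverts _).2 (Or.inr (Or.inr (Or.inl ⟨v, i, h1, h5, rfl⟩)))
  have hvM : ∀ (v : α) (i : ℕ), 1 ≤ i → i ≤ 4 → M v i ∈ N.verts :=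
    fun v i h1 h4 => (hverts _).2 (Or.inr (Or.inr (Or.inr (Or.inl ⟨v, i, h1, h4, rfl⟩))))
  have hvP : ∀ (v : α), P v ∈ N.verts :=
    fun v => (hverts _).2 (Or.inr (Or.inr (Or.inr (Or.inr (Or.inl ⟨v, rfl⟩)))))
  have hvS : ∀ (i : ℕ), 1 ≤ i → i ≤ n - 1 → S i ∈ N.verts :=
    fun i h1 h2 => (hverts _).2 (Or.inr (Or.inr (Or.inr (Or.inr (Or.inr (Or.inl ⟨i, h1, h2, rfl⟩))))))
  have hvrho : rho ∈ N.verts :=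
    (hverts _).2 (Or.inr (Or.inr (Or.inr (Or.inr (Or.inr (Or.inr rfl))))))
  -- arc helpers
  have aRho : N.arc rho (S 1) = true := (harc _ _).2 (Or.inl ⟨rfl, rfl⟩)
  have aSS : ∀ i, 1 ≤ i → i ≤ n - 2 → N.arc (S i) (S (i + 1)) = true :=
    fun i h1 h2 => (harc _ _).2 (Or.inr (Or.inl ⟨i, h1, h2, rfl, rfl⟩))
  have aSP : ∀ i, 1 ≤ i → i ≤ n - 1 → N.arc (S i) (P (e i)) = true :=
    fun i h1 h2 => (harc _ _).2 (Or.inr (Or.inr (Or.inl ⟨i, h1, h2, rfl, rfl⟩)))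
  have aSPn : N.arc (S (n - 1)) (P (e n)) = true :=
    (harc _ _).2 (Or.inr (Or.inr (Or.inr (Or.inl ⟨rfl, rfl⟩))))
  have aPM : ∀ v, N.arc (P v) (M v 4) = true :=
    fun v => (harc _ _).2 (Or.inr (Or.inr (Or.inr (Or.inr (Or.inl ⟨v, rfl, Or.inl rfl⟩)))))
  have aPW : ∀ v, N.arc (P v) (W v 7) = true :=
    fun v => (harc _ _).2 (Or.inr (Or.inr (Or.inr (Or.inr (Or.inl ⟨v, rfl, Or.inr rfl⟩)))))
  have aM4M3 : ∀ v, N.arc (M v 4) (M v 3) = true :=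
    fun v => (harc _ _).2 (Or.inr (Or.inr (Or.inr (Or.inr (Or.inr (Or.inl ⟨v, rfl, Or.inl rfl⟩))))))
  have aM4R0 : ∀ v, N.arc (M v 4) (R v 0) = true :=
    fun v => (harc _ _).2 (Or.inr (Or.inr (Or.inr (Or.inr (Or.inr (Or.inl ⟨v, rfl, Or.inr rfl⟩))))))
  have aM3M2 : ∀ v, N.arc (M v 3) (M v 2) = true :=
    fun v => (harc _ _).2 (Or.inr (Or.inr (Or.inr (Or.inr (Or.inr (Or.inr (Or.inl ⟨v, rfl, Or.inl rfl⟩)))))))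
  have aM2M1 : ∀ v, N.arc (M v 2) (M v 1) = true :=
    fun v => (harc _ _).2 (Or.inr (Or.inr (Or.inr (Or.inr (Or.inr (Or.inr (Or.inr (Or.inl ⟨v, rfl, Or.inl rfl⟩))))))))
  have aM1W4 : ∀ v, N.arc (M v 1) (W v 4) = true :=
    fun v => (harc _ _).2 (Or.inr (Or.inr (Or.inr (Or.inr (Or.inr (Or.inr (Or.inr (Or.inr (Or.inl ⟨v, rfl, Or.inr rfl⟩)))))))))
  have aR0R1 : ∀ v, N.arc (R v 0) (R v 1) = true :=
    fun v => (harc _ _).2 (Or.inr (Or.inr (Or.inr (Or.inr (Or.inr (Or.inr (Or.inr (Or.inr (Or.inr (Or.inl ⟨v, rfl, rfl⟩))))))))))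
  have aWRi : ∀ v i, 1 ≤ i → i ≤ 6 → N.arc (W v i) (R v i) = true :=
    fun v i h1 h2 => (harc _ _).2 (Or.inr (Or.inr (Or.inr (Or.inr (Or.inr (Or.inr (Or.inr (Or.inr (Or.inr (Or.inr (Or.inl ⟨v, i, h1, h2, rfl, Or.inl rfl⟩)))))))))))
  have aWRs : ∀ v i, 1 ≤ i → i ≤ 6 → N.arc (W v i) (R v (i + 1)) = true :=
    fun v i h1 h2 => (harc _ _).2 (Or.inr (Or.inr (Or.inr (Or.inr (Or.inr (Or.inr (Or.inr (Or.inr (Or.inr (Or.inr (Or.inl ⟨v, i, h1, h2, rfl, Or.inr rfl⟩)))))))))))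
  have aW7R7 : ∀ v, N.arc (W v 7) (R v 7) = true :=
    fun v => (harc _ _).2 (Or.inr (Or.inr (Or.inr (Or.inr (Or.inr (Or.inr (Or.inr (Or.inr (Or.inr (Or.inr (Or.inr (Or.inl ⟨v, rfl, Or.inl rfl⟩))))))))))))
  have aW7L5 : ∀ v, N.arc (W v 7) (L v 5) = true :=
    fun v => (harc _ _).2 (Or.inr (Or.inr (Or.inr (Or.inr (Or.inr (Or.inr (Or.inr (Or.inr (Or.inr (Or.inr (Or.inr (Or.inl ⟨v, rfl, Or.inr rfl⟩))))))))))))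
  have aRL : ∀ v i, 1 ≤ i → i ≤ 4 → N.arc (R v i) (L v i) = true :=
    fun v i h1 h2 => (harc _ _).2 (Or.inr (Or.inr (Or.inr (Or.inr (Or.inr (Or.inr (Or.inr (Or.inr (Or.inr (Or.inr (Or.inr (Or.inr (Or.inl ⟨v, i, h1, h2, rfl, rfl⟩)))))))))))))
  have aRW : ∀ u v, G.Adj u v → N.arc (R u (tau u v)) (W v (pi v u)) = true :=
    fun u v h => (harc _ _).2 (Or.inr (Or.inr (Or.inr (Or.inr (Or.inr (Or.inr (Or.inr (Or.inr (Or.inr (Or.inr (Or.inr (Or.inr (Or.inr ⟨u, v, h, rfl, rfl⟩)))))))))))))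
  -- cardinality
  have hcard : α → 4 ≤ n := by
    intro w
    have h3 := hreg w
    have hle : (insert w (G.neighborFinset w)).card ≤ Fintype.card α :=
      Finset.card_le_univ _
    rw [Finset.card_insert_of_notMem (by simp)] at hle
    have hdeg : G.degree w = (G.neighborFinset w).card := rfl
    omega
  -- the dropped-arc predicate
  set D : ℕ → ℕ → Prop := fun a b => ∃ x : α, (a = M x 1 ∧ b = R x 0) ∨
    (∃ i, 1 ≤ i ∧ i ≤ 7 ∧ a = W x i ∧ b = R x i) with hD
  have hDa : ∀ a b : ℕ, (∀ x : α, a ≠ M x 1) → (∀ (x : α) (i : ℕ), 1 ≤ i → i ≤ 7 → a ≠ W x i) →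
      ¬ D a b := by
    rintro a b h1 h2 ⟨x, ⟨ha, _⟩ | ⟨i, hi1, hi7, ha, _⟩⟩
    · exact h1 x ha
    · exact h2 x i hi1 hi7 ha
  have hDb : ∀ a b : ℕ, (∀ (x : α) (i : ℕ), i ≤ 7 → b ≠ R x i) → ¬ D a b := by
    rintro a b h1 ⟨x, ⟨_, hb⟩ | ⟨i, hi1, hi7, _, hb⟩⟩
    · exact h1 x 0 (by omega) hb
    · exact h1 x i (by omega) hb
  -- degree helpers
  have hin : ∀ x, x ∈ N.verts → x ≠ rho → ∃ u, N.arc u x = true := by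
    intro x hx hxr
    have hpos : 0 < (N.verts.filter fun u => N.arc u x = true).card := by
      rcases N.nonroot_deg x hx (by rw [hroot]; exact hxr) with ⟨h1, _⟩ | ⟨h1, _⟩ | ⟨h1, _⟩ <;>
        omega
    obtain ⟨u, hu⟩ := Finset.card_pos.mp hpos
    exact ⟨u, (Finset.mem_filter.mp hu).2⟩
  have hout1 : ∀ x, x ∈ N.verts → x ≠ rho → ∀ u1 u2 : ℕ, u1 ∈ N.verts → u2 ∈ N.verts →
      u1 ≠ u2 → N.arc u1 x = true → N.arc u2 x = true → ∃ y, N.arc x y = true := by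
    intro x hx hxr u1 u2 h1 h2 hne ha1 ha2
    have hlt : 1 < (N.verts.filter fun u => N.arc u x = true).card :=
      Finset.one_lt_card.mpr ⟨u1, Finset.mem_filter.mpr ⟨h1, ha1⟩, u2,
        Finset.mem_filter.mpr ⟨h2, ha2⟩, hne⟩
    rcases N.nonroot_deg x hx (by rw [hroot]; exact hxr) with ⟨hi, ho⟩ | ⟨hi, ho⟩ | ⟨hi, ho⟩
    · omega
    · have hpos : 0 < (N.verts.filter fun y => N.arc x y = true).card := by omega
      obtain ⟨y, hy⟩ := Finset.card_pos.mp hpos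
      exact ⟨y, (Finset.mem_filter.mp hy).2⟩
    · omega
  -- unique-parent lemma for R-vertices
  have huniqR : ∀ (w : α) (i0 : ℕ) (u : ℕ), i0 ≤ 7 → N.arc u (R w i0) = true →
      ¬ D u (R w i0) →
      (i0 = 0 ∧ u = M w 4) ∨ (i0 = 1 ∧ u = R w 0) ∨ (2 ≤ i0 ∧ u = W w (i0 - 1)) := by
    intro w i0 u hi0 hau hnd
    have hn4 := hcard w
    rcases (harc u (R w i0)).1 hau with ⟨ha, hb⟩ | ⟨i', hi1, hi2, ha, hb⟩ |
      ⟨i', hi1, hi2, ha, hb⟩ | ⟨ha, hb⟩ | ⟨x, ha, hb | hb⟩ | ⟨x, ha, hb | hb⟩ |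
      ⟨x, ha, hb | hb⟩ | ⟨x, ha, hb | hb⟩ | ⟨x, ha, hb | hb⟩ | ⟨x, ha, hb⟩ |
      ⟨x, i', hi1, hi2, ha, hb | hb⟩ | ⟨x, ha, hb | hb⟩ | ⟨x, i', hi1, hi2, ha, hb⟩ |
      ⟨x, y, hadj, ha, hb⟩
    · exact absurd hb (hRS w i0 1 hi0 le_rfl (by omega))
    · exact absurd hb (hRS w i0 (i' + 1) hi0 (by omega) (by omega))
    · exact absurd hb (hRP w (e i') i0 hi0)
    · exact absurd hb (hRP w (e n) i0 hi0)
    · exact absurd hb (hRM w x i0 4 hi0 (by omega) (by omega))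
    · exact absurd hb (hRW w x i0 7 hi0 (by omega) (by omega))
    · exact absurd hb (hRM w x i0 3 hi0 (by omega) (by omega))
    · obtain ⟨hx, h0⟩ := hRR w x i0 0 hi0 (by omega) hb
      exact Or.inl ⟨h0, by rw [ha, hx]⟩
    · exact absurd hb (hRM w x i0 2 hi0 (by omega) (by omega))
    · exact absurd hb (hRW w x i0 6 hi0 (by omega) (by omega))
    · exact absurd hb (hRM w x i0 1 hi0 (by omega) (by omega))
    · exact absurd hb (hRW w x i0 5 hi0 (by omega) (by omega))
    · obtain ⟨hx, h0⟩ := hRR w x i0 0 hi0 (by omega) hb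
      exact absurd ⟨w, Or.inl ⟨by rw [ha, hx], by rw [h0]⟩⟩ hnd
    · exact absurd hb (hRW w x i0 4 hi0 (by omega) (by omega))
    · obtain ⟨hx, h1⟩ := hRR w x i0 1 hi0 (by omega) hb
      exact Or.inr (Or.inl ⟨h1, by rw [ha, hx]⟩)
    · obtain ⟨hx, hii⟩ := hRR w x i0 i' hi0 (by omega) hb
      exact absurd ⟨w, Or.inr ⟨i0, by omega, by omega, by rw [ha, hx, hii], rfl⟩⟩ hnd
    · obtain ⟨hx, hii⟩ := hRR w x i0 (i' + 1) hi0 (by omega) hb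
      have h3 : i0 - 1 = i' := by omega
      exact Or.inr (Or.inr ⟨by omega, by rw [ha, hx, h3]⟩)
    · obtain ⟨hx, h7⟩ := hRR w x i0 7 hi0 (by omega) hb
      exact absurd ⟨w, Or.inr ⟨7, by omega, by omega, by rw [ha, hx], by rw [h7]⟩⟩ hnd
    · exact absurd hb (hRL w x i0 5 hi0 (by omega) (by omega))
    · exact absurd hb (hRL w x i0 i' hi0 (by omega) (by omega))
    · have hp := hpi y x hadj.symm
      simp only [Set.mem_insert_iff, Set.mem_singleton_iff] at hp
      exact absurd hb (hRW w y i0 (pi y x) hi0 (by omega) (by omega))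
  have huniqW : ∀ (w : α) (i0 : ℕ) (u : ℕ), 1 ≤ i0 → i0 ≤ 7 → N.arc u (W w i0) = true →
      (i0 = 7 ∧ u = P w) ∨ (4 ≤ i0 ∧ i0 ≤ 6 ∧ u = M w (i0 - 3)) ∨
      (i0 ≤ 3 ∧ ∃ z, G.Adj z w ∧ pi w z = i0 ∧ u = R z (tau z w)) := by
    intro w i0 u hi01 hi07 hau
    have hn4 := hcard w
    rcases (harc u (W w i0)).1 hau with ⟨ha, hb⟩ | ⟨i', hi1, hi2, ha, hb⟩ |
      ⟨i', hi1, hi2, ha, hb⟩ | ⟨ha, hb⟩ | ⟨x, ha, hb | hb⟩ | ⟨x, ha, hb | hb⟩ |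
      ⟨x, ha, hb | hb⟩ | ⟨x, ha, hb | hb⟩ | ⟨x, ha, hb | hb⟩ | ⟨x, ha, hb⟩ |
      ⟨x, i', hi1, hi2, ha, hb | hb⟩ | ⟨x, ha, hb | hb⟩ | ⟨x, i', hi1, hi2, ha, hb⟩ |
      ⟨x, y, hadj, ha, hb⟩
    · exact absurd hb (hWS w i0 1 hi01 hi07 le_rfl (by omega))
    · exact absurd hb (hWS w i0 (i' + 1) hi01 hi07 (by omega) (by omega))
    · exact absurd hb (hWP w (e i') i0 hi01 hi07)
    · exact absurd hb (hWP w (e n) i0 hi01 hi07)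
    · exact absurd hb (hWM w x i0 4 hi01 hi07 (by omega) (by omega))
    · obtain ⟨hx, h7⟩ := hWW w x i0 7 hi01 hi07 (by omega) (by omega) hb
      exact Or.inl ⟨h7, by rw [ha, hx]⟩
    · exact absurd hb (hWM w x i0 3 hi01 hi07 (by omega) (by omega))
    · exact absurd hb.symm (hRW x w 0 i0 (by omega) hi01 hi07)
    · exact absurd hb (hWM w x i0 2 hi01 hi07 (by omega) (by omega))
    · obtain ⟨hx, h6⟩ := hWW w x i0 6 hi01 hi07 (by omega) (by omega) hb
      have h3 : i0 - 3 = 3 := by omega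
      exact Or.inr (Or.inl ⟨by omega, by omega, by rw [ha, hx, h3]⟩)
    · exact absurd hb (hWM w x i0 1 hi01 hi07 (by omega) (by omega))
    · obtain ⟨hx, h5⟩ := hWW w x i0 5 hi01 hi07 (by omega) (by omega) hb
      have h3 : i0 - 3 = 2 := by omega
      exact Or.inr (Or.inl ⟨by omega, by omega, by rw [ha, hx, h3]⟩)
    · exact absurd hb.symm (hRW x w 0 i0 (by omega) hi01 hi07)
    · obtain ⟨hx, h4⟩ := hWW w x i0 4 hi01 hi07 (by omega) (by omega) hb
      have h3 : i0 - 3 = 1 := by omega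
      exact Or.inr (Or.inl ⟨by omega, by omega, by rw [ha, hx, h3]⟩)
    · exact absurd hb.symm (hRW x w 1 i0 (by omega) hi01 hi07)
    · exact absurd hb.symm (hRW x w i' i0 (by omega) hi01 hi07)
    · exact absurd hb.symm (hRW x w (i' + 1) i0 (by omega) hi01 hi07)
    · exact absurd hb.symm (hRW x w 7 i0 (by omega) hi01 hi07)
    · exact absurd hb (hWL w x i0 5 hi01 hi07 (by omega) (by omega))
    · exact absurd hb (hWL w x i0 i' hi01 hi07 (by omega) (by omega))
    · have hp := hpi y x hadj.symm
      simp only [Set.mem_insert_iff, Set.mem_singleton_iff] at hp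
      obtain ⟨hy, hieq⟩ := hWW w y i0 (pi y x) hi01 hi07 (by omega) (by omega) hb
      refine Or.inr (Or.inr ⟨by omega, x, by rw [hy]; exact hadj, ?_, by rw [ha, hy]⟩)
      rw [hy]; exact hieq.symm
  have huniqL : ∀ (w : α) (i0 : ℕ) (u : ℕ), 1 ≤ i0 → i0 ≤ 5 → N.arc u (L w i0) = true →
      (i0 = 5 ∧ u = W w 7) ∨ (i0 ≤ 4 ∧ u = R w i0) := by
    intro w i0 u hi01 hi05 hau
    have hn4 := hcard w
    rcases (harc u (L w i0)).1 hau with ⟨ha, hb⟩ | ⟨i', hi1, hi2, ha, hb⟩ |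
      ⟨i', hi1, hi2, ha, hb⟩ | ⟨ha, hb⟩ | ⟨x, ha, hb | hb⟩ | ⟨x, ha, hb | hb⟩ |
      ⟨x, ha, hb | hb⟩ | ⟨x, ha, hb | hb⟩ | ⟨x, ha, hb | hb⟩ | ⟨x, ha, hb⟩ |
      ⟨x, i', hi1, hi2, ha, hb | hb⟩ | ⟨x, ha, hb | hb⟩ | ⟨x, i', hi1, hi2, ha, hb⟩ |
      ⟨x, y, hadj, ha, hb⟩
    · exact absurd hb (hLS w i0 1 hi01 hi05 le_rfl (by omega))
    · exact absurd hb (hLS w i0 (i' + 1) hi01 hi05 (by omega) (by omega))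
    · exact absurd hb (hLP w (e i') i0 hi01 hi05)
    · exact absurd hb (hLP w (e n) i0 hi01 hi05)
    · exact absurd hb (hLM w x i0 4 hi01 hi05 (by omega) (by omega))
    · exact absurd hb.symm (hWL x w 7 i0 (by omega) (by omega) hi01 hi05)
    · exact absurd hb (hLM w x i0 3 hi01 hi05 (by omega) (by omega))
    · exact absurd hb.symm (hRL x w 0 i0 (by omega) hi01 hi05)
    · exact absurd hb (hLM w x i0 2 hi01 hi05 (by omega) (by omega))
    · exact absurd hb.symm (hWL x w 6 i0 (by omega) (by omega) hi01 hi05)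
    · exact absurd hb (hLM w x i0 1 hi01 hi05 (by omega) (by omega))
    · exact absurd hb.symm (hWL x w 5 i0 (by omega) (by omega) hi01 hi05)
    · exact absurd hb.symm (hRL x w 0 i0 (by omega) hi01 hi05)
    · exact absurd hb.symm (hWL x w 4 i0 (by omega) (by omega) hi01 hi05)
    · exact absurd hb.symm (hRL x w 1 i0 (by omega) hi01 hi05)
    · exact absurd hb.symm (hRL x w i' i0 (by omega) hi01 hi05)
    · exact absurd hb.symm (hRL x w (i' + 1) i0 (by omega) hi01 hi05)
    · exact absurd hb.symm (hRL x w 7 i0 (by omega) hi01 hi05)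
    · obtain ⟨hx, h5⟩ := hLL w x i0 5 hi01 hi05 (by omega) (by omega) hb
      exact Or.inl ⟨h5, by rw [ha, hx]⟩
    · obtain ⟨hx, hii⟩ := hLL w x i0 i' hi01 hi05 (by omega) (by omega) hb
      exact Or.inr ⟨by omega, by rw [ha, hx, hii]⟩
    · have hp := hpi y x hadj.symm
      simp only [Set.mem_insert_iff, Set.mem_singleton_iff] at hp
      exact absurd hb.symm (hWL y w (pi y x) i0 (by omega) (by omega) hi01 hi05)
  have huniqM : ∀ (w : α) (i0 : ℕ) (u : ℕ), 1 ≤ i0 → i0 ≤ 4 → N.arc u (M w i0) = true →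
      (i0 = 4 ∧ u = P w) ∨ (i0 ≤ 3 ∧ u = M w (i0 + 1)) := by
    intro w i0 u hi01 hi04 hau
    have hn4 := hcard w
    rcases (harc u (M w i0)).1 hau with ⟨ha, hb⟩ | ⟨i', hi1, hi2, ha, hb⟩ |
      ⟨i', hi1, hi2, ha, hb⟩ | ⟨ha, hb⟩ | ⟨x, ha, hb | hb⟩ | ⟨x, ha, hb | hb⟩ |
      ⟨x, ha, hb | hb⟩ | ⟨x, ha, hb | hb⟩ | ⟨x, ha, hb | hb⟩ | ⟨x, ha, hb⟩ |
      ⟨x, i', hi1, hi2, ha, hb | hb⟩ | ⟨x, ha, hb | hb⟩ | ⟨x, i', hi1, hi2, ha, hb⟩ |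
      ⟨x, y, hadj, ha, hb⟩
    · exact absurd hb (hMS w i0 1 hi01 hi04 le_rfl (by omega))
    · exact absurd hb (hMS w i0 (i' + 1) hi01 hi04 (by omega) (by omega))
    · exact absurd hb (hMP w (e i') i0 hi01 hi04)
    · exact absurd hb (hMP w (e n) i0 hi01 hi04)
    · obtain ⟨hx, h4⟩ := hMM w x i0 4 hi01 hi04 (by omega) (by omega) hb
      exact Or.inl ⟨h4, by rw [ha, hx]⟩
    · exact absurd hb.symm (hWM x w 7 i0 (by omega) (by omega) hi01 hi04)
    · obtain ⟨hx, h3⟩ := hMM w x i0 3 hi01 hi04 (by omega) (by omega) hb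
      have h4 : i0 + 1 = 4 := by omega
      exact Or.inr ⟨by omega, by rw [ha, hx, h4]⟩
    · exact absurd hb.symm (hRM x w 0 i0 (by omega) hi01 hi04)
    · obtain ⟨hx, h2⟩ := hMM w x i0 2 hi01 hi04 (by omega) (by omega) hb
      have h4 : i0 + 1 = 3 := by omega
      exact Or.inr ⟨by omega, by rw [ha, hx, h4]⟩
    · exact absurd hb.symm (hWM x w 6 i0 (by omega) (by omega) hi01 hi04)
    · obtain ⟨hx, h1⟩ := hMM w x i0 1 hi01 hi04 (by omega) (by omega) hb
      have h4 : i0 + 1 = 2 := by omega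
      exact Or.inr ⟨by omega, by rw [ha, hx, h4]⟩
    · exact absurd hb.symm (hWM x w 5 i0 (by omega) (by omega) hi01 hi04)
    · exact absurd hb.symm (hRM x w 0 i0 (by omega) hi01 hi04)
    · exact absurd hb.symm (hWM x w 4 i0 (by omega) (by omega) hi01 hi04)
    · exact absurd hb.symm (hRM x w 1 i0 (by omega) hi01 hi04)
    · exact absurd hb.symm (hRM x w i' i0 (by omega) hi01 hi04)
    · exact absurd hb.symm (hRM x w (i' + 1) i0 (by omega) hi01 hi04)
    · exact absurd hb.symm (hRM x w 7 i0 (by omega) hi01 hi04)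
    · exact absurd hb.symm (hLM x w 5 i0 (by omega) (by omega) hi01 hi04)
    · exact absurd hb.symm (hLM x w i' i0 (by omega) (by omega) hi01 hi04)
    · have hp := hpi y x hadj.symm
      simp only [Set.mem_insert_iff, Set.mem_singleton_iff] at hp
      exact absurd hb.symm (hWM y w (pi y x) i0 (by omega) (by omega) hi01 hi04)
  have huniqP : ∀ (w : α) (u : ℕ), N.arc u (P w) = true →
      (∃ i, 1 ≤ i ∧ i ≤ n - 1 ∧ e i = w ∧ u = S i) ∨ (e n = w ∧ u = S (n - 1)) := by
    intro w u hau
    have hn4 := hcard w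
    rcases (harc u (P w)).1 hau with ⟨ha, hb⟩ | ⟨i', hi1, hi2, ha, hb⟩ |
      ⟨i', hi1, hi2, ha, hb⟩ | ⟨ha, hb⟩ | ⟨x, ha, hb | hb⟩ | ⟨x, ha, hb | hb⟩ |
      ⟨x, ha, hb | hb⟩ | ⟨x, ha, hb | hb⟩ | ⟨x, ha, hb | hb⟩ | ⟨x, ha, hb⟩ |
      ⟨x, i', hi1, hi2, ha, hb | hb⟩ | ⟨x, ha, hb | hb⟩ | ⟨x, i', hi1, hi2, ha, hb⟩ |
      ⟨x, y, hadj, ha, hb⟩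
    · exact absurd hb (hPS w 1 le_rfl (by omega))
    · exact absurd hb (hPS w (i' + 1) (by omega) (by omega))
    · exact Or.inl ⟨i', hi1, hi2, (hPP w (e i') hb).symm, ha⟩
    · exact Or.inr ⟨(hPP w (e n) hb).symm, ha⟩
    · exact absurd hb.symm (hMP x w 4 (by omega) (by omega))
    · exact absurd hb.symm (hWP x w 7 (by omega) (by omega))
    · exact absurd hb.symm (hMP x w 3 (by omega) (by omega))
    · exact absurd hb.symm (hRP x w 0 (by omega))
    · exact absurd hb.symm (hMP x w 2 (by omega) (by omega))
    · exact absurd hb.symm (hWP x w 6 (by omega) (by omega))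
    · exact absurd hb.symm (hMP x w 1 (by omega) (by omega))
    · exact absurd hb.symm (hWP x w 5 (by omega) (by omega))
    · exact absurd hb.symm (hRP x w 0 (by omega))
    · exact absurd hb.symm (hWP x w 4 (by omega) (by omega))
    · exact absurd hb.symm (hRP x w 1 (by omega))
    · exact absurd hb.symm (hRP x w i' (by omega))
    · exact absurd hb.symm (hRP x w (i' + 1) (by omega))
    · exact absurd hb.symm (hRP x w 7 (by omega))
    · exact absurd hb.symm (hLP x w 5 (by omega) (by omega))
    · exact absurd hb.symm (hLP x w i' (by omega) (by omega))
    · have hp := hpi y x hadj.symm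
      simp only [Set.mem_insert_iff, Set.mem_singleton_iff] at hp
      exact absurd hb.symm (hWP y w (pi y x) (by omega) (by omega))
  have huniqS : ∀ (i0 : ℕ) (u : ℕ), 1 ≤ i0 → i0 ≤ n - 1 → N.arc u (S i0) = true →
      (i0 = 1 ∧ u = rho) ∨ (2 ≤ i0 ∧ u = S (i0 - 1)) := by
    intro i0 u hi01 hi0n hau
    rcases (harc u (S i0)).1 hau with ⟨ha, hb⟩ | ⟨i', hi1, hi2, ha, hb⟩ |
      ⟨i', hi1, hi2, ha, hb⟩ | ⟨ha, hb⟩ | ⟨x, ha, hb | hb⟩ | ⟨x, ha, hb | hb⟩ |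
      ⟨x, ha, hb | hb⟩ | ⟨x, ha, hb | hb⟩ | ⟨x, ha, hb | hb⟩ | ⟨x, ha, hb⟩ |
      ⟨x, i', hi1, hi2, ha, hb | hb⟩ | ⟨x, ha, hb | hb⟩ | ⟨x, i', hi1, hi2, ha, hb⟩ |
      ⟨x, y, hadj, ha, hb⟩
    · exact Or.inl ⟨hSS i0 1 hi01 hi0n le_rfl (by omega) hb, ha⟩
    · have hii := hSS i0 (i' + 1) hi01 hi0n (by omega) (by omega) hb
      have h3 : i0 - 1 = i' := by omega
      exact Or.inr ⟨by omega, by rw [ha, h3]⟩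
    · exact absurd hb.symm (hPS (e i') i0 hi01 hi0n)
    · exact absurd hb.symm (hPS (e n) i0 hi01 hi0n)
    · exact absurd hb.symm (hMS x 4 i0 (by omega) (by omega) hi01 hi0n)
    · exact absurd hb.symm (hWS x 7 i0 (by omega) (by omega) hi01 hi0n)
    · exact absurd hb.symm (hMS x 3 i0 (by omega) (by omega) hi01 hi0n)
    · exact absurd hb.symm (hRS x 0 i0 (by omega) hi01 hi0n)
    · exact absurd hb.symm (hMS x 2 i0 (by omega) (by omega) hi01 hi0n)
    · exact absurd hb.symm (hWS x 6 i0 (by omega) (by omega) hi01 hi0n)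
    · exact absurd hb.symm (hMS x 1 i0 (by omega) (by omega) hi01 hi0n)
    · exact absurd hb.symm (hWS x 5 i0 (by omega) (by omega) hi01 hi0n)
    · exact absurd hb.symm (hRS x 0 i0 (by omega) hi01 hi0n)
    · exact absurd hb.symm (hWS x 4 i0 (by omega) (by omega) hi01 hi0n)
    · exact absurd hb.symm (hRS x 1 i0 (by omega) hi01 hi0n)
    · exact absurd hb.symm (hRS x i' i0 (by omega) hi01 hi0n)
    · exact absurd hb.symm (hRS x (i' + 1) i0 (by omega) hi01 hi0n)
    · exact absurd hb.symm (hRS x 7 i0 (by omega) hi01 hi0n)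
    · exact absurd hb.symm (hLS x 5 i0 (by omega) (by omega) hi01 hi0n)
    · exact absurd hb.symm (hLS x i' i0 (by omega) (by omega) hi01 hi0n)
    · have hp := hpi y x hadj.symm
      simp only [Set.mem_insert_iff, Set.mem_singleton_iff] at hp
      exact absurd hb.symm (hWS y (pi y x) i0 (by omega) (by omega) hi01 hi0n)
  have hLout : ∀ (w : α) (i0 y0 : ℕ), 1 ≤ i0 → i0 ≤ 5 → N.arc (L w i0) y0 = true → False := by
    intro w i0 y0 hi01 hi05 hay
    have hn4 := hcard w
    rcases (harc (L w i0) y0).1 hay with ⟨ha, hb⟩ | ⟨i', hi1, hi2, ha, hb⟩ |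
      ⟨i', hi1, hi2, ha, hb⟩ | ⟨ha, hb⟩ | ⟨x, ha, hb | hb⟩ | ⟨x, ha, hb | hb⟩ |
      ⟨x, ha, hb | hb⟩ | ⟨x, ha, hb | hb⟩ | ⟨x, ha, hb | hb⟩ | ⟨x, ha, hb⟩ |
      ⟨x, i', hi1, hi2, ha, hb | hb⟩ | ⟨x, ha, hb | hb⟩ | ⟨x, i', hi1, hi2, ha, hb⟩ |
      ⟨x, y, hadj, ha, hb⟩
    · exact hLrho w i0 hi01 hi05 ha
    · exact hLS w i0 i' hi01 hi05 (by omega) (by omega) ha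
    · exact hLS w i0 i' hi01 hi05 (by omega) (by omega) ha
    · exact hLS w i0 (n - 1) hi01 hi05 (by omega) le_rfl ha
    · exact hLP w x i0 hi01 hi05 ha
    · exact hLP w x i0 hi01 hi05 ha
    · exact hLM w x i0 4 hi01 hi05 (by omega) (by omega) ha
    · exact hLM w x i0 4 hi01 hi05 (by omega) (by omega) ha
    · exact hLM w x i0 3 hi01 hi05 (by omega) (by omega) ha
    · exact hLM w x i0 3 hi01 hi05 (by omega) (by omega) ha
    · exact hLM w x i0 2 hi01 hi05 (by omega) (by omega) ha
    · exact hLM w x i0 2 hi01 hi05 (by omega) (by omega) ha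
    · exact hLM w x i0 1 hi01 hi05 (by omega) (by omega) ha
    · exact hLM w x i0 1 hi01 hi05 (by omega) (by omega) ha
    · exact hRL x w 0 i0 (by omega) hi01 hi05 ha.symm
    · exact hWL x w i' i0 (by omega) (by omega) hi01 hi05 ha.symm
    · exact hWL x w i' i0 (by omega) (by omega) hi01 hi05 ha.symm
    · exact hWL x w 7 i0 (by omega) (by omega) hi01 hi05 ha.symm
    · exact hWL x w 7 i0 (by omega) (by omega) hi01 hi05 ha.symm
    · exact hRL x w i' i0 (by omega) hi01 hi05 ha.symm
    · have ht := htau x y hadj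
      simp only [Set.mem_insert_iff, Set.mem_singleton_iff] at ht
      exact hRL x w (tau x y) i0 (by omega) hi01 hi05 ha.symm
  have aM3W6 : ∀ v, N.arc (M v 3) (W v 6) = true :=
    fun v => (harc _ _).2 (Or.inr (Or.inr (Or.inr (Or.inr (Or.inr (Or.inr (Or.inl ⟨v, rfl, Or.inr rfl⟩)))))))
  have aM2W5 : ∀ v, N.arc (M v 2) (W v 5) = true :=
    fun v => (harc _ _).2 (Or.inr (Or.inr (Or.inr (Or.inr (Or.inr (Or.inr (Or.inr (Or.inl ⟨v, rfl, Or.inr rfl⟩))))))))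
  have key2 : ∀ v ∈ N.verts, v ≠ rho → ∃ p, p ∈ N.verts ∧
      (N.arc p v = true ∧ ¬ D p v) ∧ ∀ u, N.arc u v = true → ¬ D u v → u = p := by
    intro v hv hvr
    rcases (hverts v).1 hv with ⟨w, i, hi, rfl⟩ | ⟨w, i, hi1, hi7, rfl⟩ |
      ⟨w, i, hi1, hi5, rfl⟩ | ⟨w, i, hi1, hi4, rfl⟩ | ⟨w, rfl⟩ | ⟨i, hi1, hin2, rfl⟩ | rfl
    · -- R w i
      interval_cases i
      · refine ⟨M w 4, hvM w 4 (by omega) (by omega), ⟨aM4R0 w, ?_⟩, ?_⟩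
        · rintro ⟨x, ⟨ha, _⟩ | ⟨j, hj1, hj7, ha, _⟩⟩
          · have := (hMM w x 4 1 (by omega) (by omega) (by omega) (by omega) ha).2
            omega
          · exact hWM x w j 4 hj1 hj7 (by omega) (by omega) ha.symm
        · intro u hu hd
          rcases huniqR w 0 u (by omega) hu hd with ⟨_, hueq⟩ | ⟨h1, _⟩ | ⟨h1, _⟩
          · exact hueq
          · omega
          · omega
      · refine ⟨R w 0, hvR w 0 (by omega), ⟨aR0R1 w,
          hDa _ _ (fun x h => hRM w x 0 1 (by omega) (by omega) (by omega) h)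
            (fun x j hj1 hj7 h => hRW w x 0 j (by omega) hj1 hj7 h)⟩, ?_⟩
        intro u hu hd
        rcases huniqR w 1 u (by omega) hu hd with ⟨h1, _⟩ | ⟨_, hueq⟩ | ⟨h1, _⟩
        · omega
        · exact hueq
        · omega
      · refine ⟨W w 1, hvW w 1 (by omega) (by omega),
          ⟨by simpa using aWRs w 1 (by omega) (by omega), ?_⟩, ?_⟩
        · rintro ⟨x, ⟨ha, _⟩ | ⟨j, hj1, hj7, ha, hb⟩⟩
          · exact hWM w x 1 1 (by omega) (by omega) (by omega) (by omega) ha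
          · have e1 := (hWW w x 1 j (by omega) (by omega) hj1 hj7 ha).2
            have e2 := (hRR w x 2 j (by omega) (by omega) hb).2
            omega
        · intro u hu hd
          rcases huniqR w 2 u (by omega) hu hd with ⟨h1, _⟩ | ⟨h1, _⟩ | ⟨_, hueq⟩
          · omega
          · omega
          · simpa using hueq
      · refine ⟨W w 2, hvW w 2 (by omega) (by omega),
          ⟨by simpa using aWRs w 2 (by omega) (by omega), ?_⟩, ?_⟩
        · rintro ⟨x, ⟨ha, _⟩ | ⟨j, hj1, hj7, ha, hb⟩⟩
          · exact hWM w x 2 1 (by omega) (by omega) (by omega) (by omega) ha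
          · have e1 := (hWW w x 2 j (by omega) (by omega) hj1 hj7 ha).2
            have e2 := (hRR w x 3 j (by omega) (by omega) hb).2
            omega
        · intro u hu hd
          rcases huniqR w 3 u (by omega) hu hd with ⟨h1, _⟩ | ⟨h1, _⟩ | ⟨_, hueq⟩
          · omega
          · omega
          · simpa using hueq
      · refine ⟨W w 3, hvW w 3 (by omega) (by omega),
          ⟨by simpa using aWRs w 3 (by omega) (by omega), ?_⟩, ?_⟩
        · rintro ⟨x, ⟨ha, _⟩ | ⟨j, hj1, hj7, ha, hb⟩⟩
          · exact hWM w x 3 1 (by omega) (by omega) (by omega) (by omega) ha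
          · have e1 := (hWW w x 3 j (by omega) (by omega) hj1 hj7 ha).2
            have e2 := (hRR w x 4 j (by omega) (by omega) hb).2
            omega
        · intro u hu hd
          rcases huniqR w 4 u (by omega) hu hd with ⟨h1, _⟩ | ⟨h1, _⟩ | ⟨_, hueq⟩
          · omega
          · omega
          · simpa using hueq
      · refine ⟨W w 4, hvW w 4 (by omega) (by omega),
          ⟨by simpa using aWRs w 4 (by omega) (by omega), ?_⟩, ?_⟩
        · rintro ⟨x, ⟨ha, _⟩ | ⟨j, hj1, hj7, ha, hb⟩⟩
          · exact hWM w x 4 1 (by omega) (by omega) (by omega) (by omega) ha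
          · have e1 := (hWW w x 4 j (by omega) (by omega) hj1 hj7 ha).2
            have e2 := (hRR w x 5 j (by omega) (by omega) hb).2
            omega
        · intro u hu hd
          rcases huniqR w 5 u (by omega) hu hd with ⟨h1, _⟩ | ⟨h1, _⟩ | ⟨_, hueq⟩
          · omega
          · omega
          · simpa using hueq
      · refine ⟨W w 5, hvW w 5 (by omega) (by omega),
          ⟨by simpa using aWRs w 5 (by omega) (by omega), ?_⟩, ?_⟩
        · rintro ⟨x, ⟨ha, _⟩ | ⟨j, hj1, hj7, ha, hb⟩⟩
          · exact hWM w x 5 1 (by omega) (by omega) (by omega) (by omega) ha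
          · have e1 := (hWW w x 5 j (by omega) (by omega) hj1 hj7 ha).2
            have e2 := (hRR w x 6 j (by omega) (by omega) hb).2
            omega
        · intro u hu hd
          rcases huniqR w 6 u (by omega) hu hd with ⟨h1, _⟩ | ⟨h1, _⟩ | ⟨_, hueq⟩
          · omega
          · omega
          · simpa using hueq
      · refine ⟨W w 6, hvW w 6 (by omega) (by omega),
          ⟨by simpa using aWRs w 6 (by omega) (by omega), ?_⟩, ?_⟩
        · rintro ⟨x, ⟨ha, _⟩ | ⟨j, hj1, hj7, ha, hb⟩⟩
          · exact hWM w x 6 1 (by omega) (by omega) (by omega) (by omega) ha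
          · have e1 := (hWW w x 6 j (by omega) (by omega) hj1 hj7 ha).2
            have e2 := (hRR w x 7 j (by omega) (by omega) hb).2
            omega
        · intro u hu hd
          rcases huniqR w 7 u (by omega) hu hd with ⟨h1, _⟩ | ⟨h1, _⟩ | ⟨_, hueq⟩
          · omega
          · omega
          · simpa using hueq
    · -- W w i
      interval_cases i
      · obtain ⟨u0, hu0⟩ := hin (W w 1) (hvW w 1 (by omega) (by omega))
          (hWrho w 1 (by omega) (by omega))
        rcases huniqW w 1 u0 (by omega) (by omega) hu0 with ⟨h7, _⟩ | ⟨h4, _, _⟩ |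
          ⟨_, z, hz, hpz, hu0eq⟩
        · omega
        · omega
        · have htz := htau z w hz
          simp only [Set.mem_insert_iff, Set.mem_singleton_iff] at htz
          refine ⟨R z (tau z w), hvR z (tau z w) (by omega), ⟨?_,
            hDb _ _ (fun x j hj h => hRW x w j 1 hj (by omega) (by omega) h.symm)⟩, ?_⟩
          · have := aRW z w hz
            rwa [hpz] at this
          · intro u hu hd
            rcases huniqW w 1 u (by omega) (by omega) hu with ⟨h7, _⟩ | ⟨h4, _, _⟩ |
              ⟨_, z', hz', hpz', hueq⟩
            · omega
            · omega
            · have : z' = z := hpiInj w z' z hz'.symm hz.symm (hpz'.trans hpz.symm)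
              rw [hueq, this]
      · obtain ⟨u0, hu0⟩ := hin (W w 2) (hvW w 2 (by omega) (by omega))
          (hWrho w 2 (by omega) (by omega))
        rcases huniqW w 2 u0 (by omega) (by omega) hu0 with ⟨h7, _⟩ | ⟨h4, _, _⟩ |
          ⟨_, z, hz, hpz, hu0eq⟩
        · omega
        · omega
        · have htz := htau z w hz
          simp only [Set.mem_insert_iff, Set.mem_singleton_iff] at htz
          refine ⟨R z (tau z w), hvR z (tau z w) (by omega), ⟨?_,
            hDb _ _ (fun x j hj h => hRW x w j 2 hj (by omega) (by omega) h.symm)⟩, ?_⟩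
          · have := aRW z w hz
            rwa [hpz] at this
          · intro u hu hd
            rcases huniqW w 2 u (by omega) (by omega) hu with ⟨h7, _⟩ | ⟨h4, _, _⟩ |
              ⟨_, z', hz', hpz', hueq⟩
            · omega
            · omega
            · have : z' = z := hpiInj w z' z hz'.symm hz.symm (hpz'.trans hpz.symm)
              rw [hueq, this]
      · obtain ⟨u0, hu0⟩ := hin (W w 3) (hvW w 3 (by omega) (by omega))
          (hWrho w 3 (by omega) (by omega))
        rcases huniqW w 3 u0 (by omega) (by omega) hu0 with ⟨h7, _⟩ | ⟨h4, _, _⟩ |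
          ⟨_, z, hz, hpz, hu0eq⟩
        · omega
        · omega
        · have htz := htau z w hz
          simp only [Set.mem_insert_iff, Set.mem_singleton_iff] at htz
          refine ⟨R z (tau z w), hvR z (tau z w) (by omega), ⟨?_,
            hDb _ _ (fun x j hj h => hRW x w j 3 hj (by omega) (by omega) h.symm)⟩, ?_⟩
          · have := aRW z w hz
            rwa [hpz] at this
          · intro u hu hd
            rcases huniqW w 3 u (by omega) (by omega) hu with ⟨h7, _⟩ | ⟨h4, _, _⟩ |
              ⟨_, z', hz', hpz', hueq⟩
            · omega
            · omega
            · have : z' = z := hpiInj w z' z hz'.symm hz.symm (hpz'.trans hpz.symm)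
              rw [hueq, this]
      · refine ⟨M w 1, hvM w 1 (by omega) (by omega), ⟨aM1W4 w,
          hDb _ _ (fun x j hj h => hRW x w j 4 hj (by omega) (by omega) h.symm)⟩, ?_⟩
        intro u hu hd
        rcases huniqW w 4 u (by omega) (by omega) hu with ⟨h7, _⟩ | ⟨_, _, hueq⟩ | ⟨h3, _⟩
        · omega
        · simpa using hueq
        · omega
      · refine ⟨M w 2, hvM w 2 (by omega) (by omega), ⟨aM2W5 w,
          hDb _ _ (fun x j hj h => hRW x w j 5 hj (by omega) (by omega) h.symm)⟩, ?_⟩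
        intro u hu hd
        rcases huniqW w 5 u (by omega) (by omega) hu with ⟨h7, _⟩ | ⟨_, _, hueq⟩ | ⟨h3, _⟩
        · omega
        · simpa using hueq
        · omega
      · refine ⟨M w 3, hvM w 3 (by omega) (by omega), ⟨aM3W6 w,
          hDb _ _ (fun x j hj h => hRW x w j 6 hj (by omega) (by omega) h.symm)⟩, ?_⟩
        intro u hu hd
        rcases huniqW w 6 u (by omega) (by omega) hu with ⟨h7, _⟩ | ⟨_, _, hueq⟩ | ⟨h3, _⟩
        · omega
        · simpa using hueq
        · omega
      · refine ⟨P w, hvP w, ⟨aPW w,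
          hDb _ _ (fun x j hj h => hRW x w j 7 hj (by omega) (by omega) h.symm)⟩, ?_⟩
        intro u hu hd
        rcases huniqW w 7 u (by omega) (by omega) hu with ⟨_, hueq⟩ | ⟨_, h6, _⟩ | ⟨h3, _⟩
        · exact hueq
        · omega
        · omega
    · -- L w i
      interval_cases i
      · refine ⟨R w 1, hvR w 1 (by omega), ⟨aRL w 1 (by omega) (by omega),
          hDb _ _ (fun x j hj h => hRL x w j 1 hj (by omega) (by omega) h.symm)⟩, ?_⟩
        intro u hu hd
        rcases huniqL w 1 u (by omega) (by omega) hu with ⟨h5, _⟩ | ⟨_, hueq⟩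
        · omega
        · exact hueq
      · refine ⟨R w 2, hvR w 2 (by omega), ⟨aRL w 2 (by omega) (by omega),
          hDb _ _ (fun x j hj h => hRL x w j 2 hj (by omega) (by omega) h.symm)⟩, ?_⟩
        intro u hu hd
        rcases huniqL w 2 u (by omega) (by omega) hu with ⟨h5, _⟩ | ⟨_, hueq⟩
        · omega
        · exact hueq
      · refine ⟨R w 3, hvR w 3 (by omega), ⟨aRL w 3 (by omega) (by omega),
          hDb _ _ (fun x j hj h => hRL x w j 3 hj (by omega) (by omega) h.symm)⟩, ?_⟩
        intro u hu hd
        rcases huniqL w 3 u (by omega) (by omega) hu with ⟨h5, _⟩ | ⟨_, hueq⟩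
        · omega
        · exact hueq
      · refine ⟨R w 4, hvR w 4 (by omega), ⟨aRL w 4 (by omega) (by omega),
          hDb _ _ (fun x j hj h => hRL x w j 4 hj (by omega) (by omega) h.symm)⟩, ?_⟩
        intro u hu hd
        rcases huniqL w 4 u (by omega) (by omega) hu with ⟨h5, _⟩ | ⟨_, hueq⟩
        · omega
        · exact hueq
      · refine ⟨W w 7, hvW w 7 (by omega) (by omega), ⟨aW7L5 w,
          hDb _ _ (fun x j hj h => hRL x w j 5 hj (by omega) (by omega) h.symm)⟩, ?_⟩
        intro u hu hd
        rcases huniqL w 5 u (by omega) (by omega) hu with ⟨_, hueq⟩ | ⟨h4, _⟩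
        · exact hueq
        · omega
    · -- M w i
      interval_cases i
      · refine ⟨M w 2, hvM w 2 (by omega) (by omega), ⟨aM2M1 w,
          hDb _ _ (fun x j hj h => hRM x w j 1 hj (by omega) (by omega) h.symm)⟩, ?_⟩
        intro u hu hd
        rcases huniqM w 1 u (by omega) (by omega) hu with ⟨h4, _⟩ | ⟨_, hueq⟩
        · omega
        · simpa using hueq
      · refine ⟨M w 3, hvM w 3 (by omega) (by omega), ⟨aM3M2 w,
          hDb _ _ (fun x j hj h => hRM x w j 2 hj (by omega) (by omega) h.symm)⟩, ?_⟩
        intro u hu hd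
        rcases huniqM w 2 u (by omega) (by omega) hu with ⟨h4, _⟩ | ⟨_, hueq⟩
        · omega
        · simpa using hueq
      · refine ⟨M w 4, hvM w 4 (by omega) (by omega), ⟨aM4M3 w,
          hDb _ _ (fun x j hj h => hRM x w j 3 hj (by omega) (by omega) h.symm)⟩, ?_⟩
        intro u hu hd
        rcases huniqM w 3 u (by omega) (by omega) hu with ⟨h4, _⟩ | ⟨_, hueq⟩
        · omega
        · simpa using hueq
      · refine ⟨P w, hvP w, ⟨aPM w,
          hDb _ _ (fun x j hj h => hRM x w j 4 hj (by omega) (by omega) h.symm)⟩, ?_⟩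
        intro u hu hd
        rcases huniqM w 4 u (by omega) (by omega) hu with ⟨_, hueq⟩ | ⟨h3, _⟩
        · exact hueq
        · omega
    · -- P w
      have hn4 := hcard w
      obtain ⟨iw, ⟨hiw1, hiwn, hiwe⟩, hiwu⟩ := he w
      rcases Nat.lt_or_ge iw n with hlt | hge
      · have hiw' : iw ≤ n - 1 := by omega
        refine ⟨S iw, hvS iw hiw1 hiw', ⟨?_,
          hDb _ _ (fun x j hj h => hRP x w j hj h.symm)⟩, ?_⟩
        · have := aSP iw hiw1 hiw'
          rwa [hiwe] at this
        · intro u hu hd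
          rcases huniqP w u hu with ⟨i', h1', h2', hei', hueq⟩ | ⟨hen, hueq⟩
          · have : i' = iw := hiwu i' ⟨h1', by omega, hei'⟩
            rw [hueq, this]
          · have : n = iw := hiwu n ⟨by omega, le_rfl, hen⟩
            omega
      · have hiwn' : iw = n := by omega
        refine ⟨S (n - 1), hvS (n - 1) (by omega) le_rfl, ⟨?_,
          hDb _ _ (fun x j hj h => hRP x w j hj h.symm)⟩, ?_⟩
        · have := aSPn
          rw [hiwn'] at hiwe
          rwa [hiwe] at this
        · intro u hu hd
          rcases huniqP w u hu with ⟨i', h1', h2', hei', hueq⟩ | ⟨hen, hueq⟩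
          · have : i' = iw := hiwu i' ⟨h1', by omega, hei'⟩
            omega
          · exact hueq
    · -- S i
      rcases Nat.lt_or_ge i 2 with h2 | h2
      · have h1 : i = 1 := by omega
        subst h1
        refine ⟨rho, hvrho, ⟨aRho,
          hDa _ _ (fun x h => (hMrho x 1 (by omega) (by omega)) h.symm)
            (fun x j hj1 hj7 h => (hWrho x j hj1 hj7) h.symm)⟩, ?_⟩
        intro u hu hd
        rcases huniqS 1 u (by omega) hin2 hu with ⟨_, hueq⟩ | ⟨hge, _⟩
        · exact hueq
        · omega
      · refine ⟨S (i - 1), hvS (i - 1) (by omega) (by omega), ⟨?_,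
          hDb _ _ (fun x j hj h => hRS x j i hj hi1 hin2 h.symm)⟩, ?_⟩
        · have := aSS (i - 1) (by omega) (by omega)
          rwa [show i - 1 + 1 = i from by omega] at this
        · intro u hu hd
          rcases huniqS i u hi1 hin2 hu with ⟨h1, _⟩ | ⟨_, hueq⟩
          · omega
          · exact hueq
    · exact absurd rfl hvr
  have key3 : ∀ v ∈ N.verts, ¬ IsLeaf N v → ∃ y, N.arc v y = true ∧ ¬ D v y := by
    intro v hv hleaf
    rcases (hverts v).1 hv with ⟨w, i, hi, rfl⟩ | ⟨w, i, hi1, hi7, rfl⟩ |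
      ⟨w, i, hi1, hi5, rfl⟩ | ⟨w, i, hi1, hi4, rfl⟩ | ⟨w, rfl⟩ | ⟨i, hi1, hin2, rfl⟩ | rfl
    · -- R w i
      interval_cases i
      · exact ⟨R w 1, aR0R1 w,
          hDa _ _ (fun x h => hRM w x 0 1 (by omega) (by omega) (by omega) h)
            (fun x j hj1 hj7 h => hRW w x 0 j (by omega) hj1 hj7 h)⟩
      · exact ⟨L w 1, aRL w 1 (by omega) (by omega),
          hDb _ _ (fun x j hj h => hRL x w j 1 hj (by omega) (by omega) h.symm)⟩
      · exact ⟨L w 2, aRL w 2 (by omega) (by omega),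
          hDb _ _ (fun x j hj h => hRL x w j 2 hj (by omega) (by omega) h.symm)⟩
      · exact ⟨L w 3, aRL w 3 (by omega) (by omega),
          hDb _ _ (fun x j hj h => hRL x w j 3 hj (by omega) (by omega) h.symm)⟩
      · exact ⟨L w 4, aRL w 4 (by omega) (by omega),
          hDb _ _ (fun x j hj h => hRL x w j 4 hj (by omega) (by omega) h.symm)⟩
      · obtain ⟨y, hy⟩ := hout1 (R w 5) (hvR w 5 (by omega)) (hRrho w 5 (by omega))
          (W w 4) (W w 5) (hvW w 4 (by omega) (by omega)) (hvW w 5 (by omega) (by omega))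
          (fun h => by
            have := (hWW w w 4 5 (by omega) (by omega) (by omega) (by omega) h).2; omega)
          (by simpa using aWRs w 4 (by omega) (by omega)) (aWRi w 5 (by omega) (by omega))
        exact ⟨y, hy, hDa _ _ (fun x h => hRM w x 5 1 (by omega) (by omega) (by omega) h)
          (fun x j hj1 hj7 h => hRW w x 5 j (by omega) hj1 hj7 h)⟩
      · obtain ⟨y, hy⟩ := hout1 (R w 6) (hvR w 6 (by omega)) (hRrho w 6 (by omega))
          (W w 5) (W w 6) (hvW w 5 (by omega) (by omega)) (hvW w 6 (by omega) (by omega))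
          (fun h => by
            have := (hWW w w 5 6 (by omega) (by omega) (by omega) (by omega) h).2; omega)
          (by simpa using aWRs w 5 (by omega) (by omega)) (aWRi w 6 (by omega) (by omega))
        exact ⟨y, hy, hDa _ _ (fun x h => hRM w x 6 1 (by omega) (by omega) (by omega) h)
          (fun x j hj1 hj7 h => hRW w x 6 j (by omega) hj1 hj7 h)⟩
      · obtain ⟨y, hy⟩ := hout1 (R w 7) (hvR w 7 (by omega)) (hRrho w 7 (by omega))
          (W w 6) (W w 7) (hvW w 6 (by omega) (by omega)) (hvW w 7 (by omega) (by omega))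
          (fun h => by
            have := (hWW w w 6 7 (by omega) (by omega) (by omega) (by omega) h).2; omega)
          (by simpa using aWRs w 6 (by omega) (by omega)) (aW7R7 w)
        exact ⟨y, hy, hDa _ _ (fun x h => hRM w x 7 1 (by omega) (by omega) (by omega) h)
          (fun x j hj1 hj7 h => hRW w x 7 j (by omega) hj1 hj7 h)⟩
    · -- W w i
      interval_cases i
      · refine ⟨R w 2, by simpa using aWRs w 1 (by omega) (by omega), ?_⟩
        rintro ⟨x, ⟨ha, _⟩ | ⟨j, hj1, hj7, ha, hb⟩⟩
        · exact hWM w x 1 1 (by omega) (by omega) (by omega) (by omega) ha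
        · have e1 := (hWW w x 1 j (by omega) (by omega) hj1 hj7 ha).2
          have e2 := (hRR w x 2 j (by omega) (by omega) hb).2
          omega
      · refine ⟨R w 3, by simpa using aWRs w 2 (by omega) (by omega), ?_⟩
        rintro ⟨x, ⟨ha, _⟩ | ⟨j, hj1, hj7, ha, hb⟩⟩
        · exact hWM w x 2 1 (by omega) (by omega) (by omega) (by omega) ha
        · have e1 := (hWW w x 2 j (by omega) (by omega) hj1 hj7 ha).2
          have e2 := (hRR w x 3 j (by omega) (by omega) hb).2
          omega
      · refine ⟨R w 4, by simpa using aWRs w 3 (by omega) (by omega), ?_⟩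
        rintro ⟨x, ⟨ha, _⟩ | ⟨j, hj1, hj7, ha, hb⟩⟩
        · exact hWM w x 3 1 (by omega) (by omega) (by omega) (by omega) ha
        · have e1 := (hWW w x 3 j (by omega) (by omega) hj1 hj7 ha).2
          have e2 := (hRR w x 4 j (by omega) (by omega) hb).2
          omega
      · refine ⟨R w 5, by simpa using aWRs w 4 (by omega) (by omega), ?_⟩
        rintro ⟨x, ⟨ha, _⟩ | ⟨j, hj1, hj7, ha, hb⟩⟩
        · exact hWM w x 4 1 (by omega) (by omega) (by omega) (by omega) ha
        · have e1 := (hWW w x 4 j (by omega) (by omega) hj1 hj7 ha).2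
          have e2 := (hRR w x 5 j (by omega) (by omega) hb).2
          omega
      · refine ⟨R w 6, by simpa using aWRs w 5 (by omega) (by omega), ?_⟩
        rintro ⟨x, ⟨ha, _⟩ | ⟨j, hj1, hj7, ha, hb⟩⟩
        · exact hWM w x 5 1 (by omega) (by omega) (by omega) (by omega) ha
        · have e1 := (hWW w x 5 j (by omega) (by omega) hj1 hj7 ha).2
          have e2 := (hRR w x 6 j (by omega) (by omega) hb).2
          omega
      · refine ⟨R w 7, by simpa using aWRs w 6 (by omega) (by omega), ?_⟩
        rintro ⟨x, ⟨ha, _⟩ | ⟨j, hj1, hj7, ha, hb⟩⟩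
        · exact hWM w x 6 1 (by omega) (by omega) (by omega) (by omega) ha
        · have e1 := (hWW w x 6 j (by omega) (by omega) hj1 hj7 ha).2
          have e2 := (hRR w x 7 j (by omega) (by omega) hb).2
          omega
      · exact ⟨L w 5, aW7L5 w,
          hDb _ _ (fun x j hj h => hRL x w j 5 hj (by omega) (by omega) h.symm)⟩
    · -- L w i : it is a leaf, contradiction
      exfalso
      have hout0 : (N.verts.filter fun y => N.arc (L w i) y = true).card = 0 := by
        rw [Finset.card_eq_zero, Finset.eq_empty_iff_forall_notMem]
        intro y hy
        exact hLout w i y hi1 hi5 (Finset.mem_filter.mp hy).2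
      rcases N.nonroot_deg _ (hvL w i hi1 hi5) (by rw [hroot]; exact hLrho w i hi1 hi5) with
        ⟨h1, h2⟩ | ⟨h1, h2⟩ | ⟨h1, h2⟩
      · omega
      · omega
      · exact hleaf ⟨hvL w i hi1 hi5, h1, h2⟩
    · -- M w i
      interval_cases i
      · exact ⟨W w 4, aM1W4 w,
          hDb _ _ (fun x j hj h => hRW x w j 4 hj (by omega) (by omega) h.symm)⟩
      · exact ⟨M w 1, aM2M1 w,
          hDb _ _ (fun x j hj h => hRM x w j 1 hj (by omega) (by omega) h.symm)⟩
      · exact ⟨M w 2, aM3M2 w,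
          hDb _ _ (fun x j hj h => hRM x w j 2 hj (by omega) (by omega) h.symm)⟩
      · exact ⟨M w 3, aM4M3 w,
          hDb _ _ (fun x j hj h => hRM x w j 3 hj (by omega) (by omega) h.symm)⟩
    · exact ⟨M w 4, aPM w,
        hDb _ _ (fun x j hj h => hRM x w j 4 hj (by omega) (by omega) h.symm)⟩
    · exact ⟨P (e i), aSP i hi1 hin2,
        hDb _ _ (fun x j hj h => hRP x (e i) j hj h.symm)⟩
    · exact ⟨S 1, aRho,
        hDa _ _ (fun x h => (hMrho x 1 (by omega) (by omega)) h.symm)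
          (fun x j hj1 hj7 h => (hWrho x j hj1 hj7) h.symm)⟩
  -- assemble the spanning tree
  refine ⟨fun a b => N.arc a b && !(decide (D a b)), ?_, ?_, ?_⟩
  · intro u v h
    simp only [Bool.and_eq_true] at h
    exact h.1
  · intro v hv hvr
    obtain ⟨p, hpmem, ⟨hparc, hpD⟩, hpu⟩ := key2 v hv (by rw [hroot] at hvr; exact hvr)
    rw [Finset.card_eq_one]
    refine ⟨p, ?_⟩
    ext u
    simp only [Finset.mem_filter, Finset.mem_singleton, Bool.and_eq_true,
      Bool.not_eq_true', decide_eq_false_iff_not]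
    constructor
    · rintro ⟨_, ha, hd⟩
      exact hpu u ha hd
    · rintro rfl
      exact ⟨hpmem, hparc, hpD⟩
  · intro v hv hl
    obtain ⟨y, hy, hyD⟩ := key3 v hv hl
    refine ⟨y, ?_⟩
    simp only [Bool.and_eq_true, Bool.not_eq_true', decide_eq_false_iff_not]
    exact ⟨hy, hyD⟩

end PhyloNet
end
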